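/- arXiv:2404.03773 — 9 statements merged into one kernel-verified Lean document; each statement's English description precedes it below -/
import Mathlib

section
/- Let η ≥ 0, v > 0, and let (Ω, F, (F_t)_{t≥0}, P) be a filtered probability space. Let Ṽ : [η,∞) × ℝ → [0,∞) be a continuous function such that (a) Ṽ(η,θ) = 0 for all θ ∈ ℝ; (b) Ṽ is continuous at r = η uniformly in θ, i.e. for every ε > 0 there is δ > 0 such that Ṽ(r,θ) < ε whenever η ≤ r < η + δ and θ ∈ ℝ; (c) there exist constants C, D ≥ 0 with Ṽ(r,θ) ≤ C·r + D for all (r,θ) ∈ [η,∞) × ℝ. Let (R_t, Θ_t)_{t≥0} be continuous adapted processes with values in [η,∞) × ℝ such that R_0 = r, Θ_0 = θ almost surely and |R_t − R_s| ≤ v·|t − s| for all s, t ≥ 0 almost surely, and let τ be a stopping time with E(τ) < ∞ and R_τ = η almost surely. If the process (t ∧ τ + Ṽ(R_{t∧τ}, Θ_{t∧τ}))_{t≥0} is a submartingale with respect to (F_t), then Ṽ(r, θ) ≤ E(τ). -/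
open MeasureTheory ProbabilityTheory Real
open scoped NNReal

/-- **Verification theorem, part 1 (submartingale inequality).**
If `Ṽ` is a candidate value function vanishing on the target circle `r = η`,
continuous at `r = η` uniformly in `θ`, of at most linear growth, and if for the
position process `(R, Θ)` of an admissible strategy the process
`t ↦ t ∧ τ + Ṽ(R_{t∧τ}, Θ_{t∧τ})` is a submartingale, then `Ṽ(r,θ) ≤ E(τ)`. -/
theorem verification_submartingale
    {Ω : Type*} {m : MeasurableSpace Ω} {μ : Measure Ω} [IsProbabilityMeasure μ]
    (ℱ : MeasureTheory.Filtration ℝ≥0 m)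
    (η v : ℝ) (hη : 0 ≤ η) (hv : 0 < v)
    (Vt : ℝ → ℝ → ℝ)
    (hVcont : ContinuousOn (fun p : ℝ × ℝ => Vt p.1 p.2) (Set.Ici η ×ˢ Set.univ))
    (hVnonneg : ∀ r θ : ℝ, η ≤ r → 0 ≤ Vt r θ)
    (ha : ∀ θ : ℝ, Vt η θ = 0)
    (hb : ∀ ε : ℝ, 0 < ε → ∃ δ : ℝ, 0 < δ ∧
      ∀ r θ : ℝ, η ≤ r → r < η + δ → Vt r θ < ε)
    (C D : ℝ) (hC : 0 ≤ C) (hD : 0 ≤ D)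
    (hc : ∀ r θ : ℝ, η ≤ r → Vt r θ ≤ C * r + D)
    (R Θ : ℝ≥0 → Ω → ℝ)
    (hRcont : ∀ ω, Continuous fun t => R t ω)
    (hΘcont : ∀ ω, Continuous fun t => Θ t ω)
    (hRadapted : Adapted ℱ R) (hΘadapted : Adapted ℱ Θ)
    (hRrange : ∀ t ω, η ≤ R t ω)
    (r θ : ℝ) (hr : η ≤ r)
    (hR0 : ∀ᵐ ω ∂μ, R 0 ω = r) (hΘ0 : ∀ᵐ ω ∂μ, Θ 0 ω = θ)
    (hLip : ∀ᵐ ω ∂μ, ∀ s t : ℝ≥0, |R t ω - R s ω| ≤ v * |(t : ℝ) - (s : ℝ)|)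
    (τ : Ω → ℝ≥0) (hτ : IsStoppingTime ℱ (fun ω => (τ ω : WithTop ℝ≥0)))
    (hτint : Integrable (fun ω => (τ ω : ℝ)) μ)
    (hRτ : ∀ᵐ ω ∂μ, R (τ ω) ω = η)
    (hsub : Submartingale
      (fun (t : ℝ≥0) ω => ((min t (τ ω) : ℝ≥0) : ℝ) + Vt (R (min t (τ ω)) ω) (Θ (min t (τ ω)) ω)) ℱ μ) :
    Vt r θ ≤ ∫ ω, (τ ω : ℝ) ∂μ := by
  classical
  set X : ℝ≥0 → Ω → ℝ := fun t ω =>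
    ((min t (τ ω) : ℝ≥0) : ℝ) + Vt (R (min t (τ ω)) ω) (Θ (min t (τ ω)) ω) with hX
  have hτmeas : Measurable fun ω => τ ω :=
    by exact (hτ.measurable.mono hτ.measurableSpace_le le_rfl).untopD (0 : ℝ≥0)
  have hτrmeas : Measurable fun ω => (τ ω : ℝ) := hτmeas.coe_nnreal_real
  -- integrability of min n τ (as real)
  have hminmeas : ∀ n : ℝ≥0, Measurable fun ω => ((min n (τ ω) : ℝ≥0) : ℝ) := by
    intro n
    exact (measurable_const.min hτmeas).coe_nnreal_real
  have hminint : ∀ n : ℝ≥0, Integrable (fun ω => ((min n (τ ω) : ℝ≥0) : ℝ)) μ := by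
    intro n
    refine hτint.mono (hminmeas n).aestronglyMeasurable ?_
    filter_upwards with ω
    simp only [Real.norm_eq_abs]
    rw [abs_of_nonneg (NNReal.coe_nonneg _), abs_of_nonneg (NNReal.coe_nonneg _)]
    exact_mod_cast min_le_right n (τ ω)
  -- g n ω := the V-term
  set g : ℝ≥0 → Ω → ℝ := fun n ω => Vt (R (min n (τ ω)) ω) (Θ (min n (τ ω)) ω) with hg
  have hgint : ∀ n : ℝ≥0, Integrable (g n) μ := by
    intro n
    have : g n = fun ω => X n ω - ((min n (τ ω) : ℝ≥0) : ℝ) := by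
      funext ω; simp [hX, hg]
    rw [this]
    exact (hsub.integrable n).sub (hminint n)
  -- Step A : ∫ X 0 = Vt r θ
  have hX0 : ∫ ω, X 0 ω ∂μ = Vt r θ := by
    have : (fun ω => X 0 ω) =ᵐ[μ] fun _ => Vt r θ := by
      filter_upwards [hR0, hΘ0] with ω h1 h2
      have hm : min (0:ℝ≥0) (τ ω) = 0 := min_eq_left zero_le
      simp [hX, hm, h1, h2]
    rw [integral_congr_ae this, integral_const, probReal_univ]
    simp
  -- Step B : submartingale inequality
  have hXle : ∀ n : ℝ≥0, ∫ ω, X 0 ω ∂μ ≤ ∫ ω, X n ω ∂μ := by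
    intro n
    have := hsub.setIntegral_le (show (0:ℝ≥0) ≤ n from zero_le) (MeasurableSet.univ : MeasurableSet[ℱ 0] Set.univ)
    simpa [setIntegral_univ] using this
  -- Step C : split and bound
  have hkey : ∀ n : ℝ≥0, Vt r θ ≤ (∫ ω, (τ ω : ℝ) ∂μ) + ∫ ω, g n ω ∂μ := by
    intro n
    have hsplit : ∫ ω, X n ω ∂μ
        = (∫ ω, ((min n (τ ω) : ℝ≥0) : ℝ) ∂μ) + ∫ ω, g n ω ∂μ :=
      integral_add (hminint n) (hgint n)
    have hmono : ∫ ω, ((min n (τ ω) : ℝ≥0) : ℝ) ∂μ ≤ ∫ ω, (τ ω : ℝ) ∂μ := by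
      refine integral_mono (hminint n) hτint fun ω => ?_
      exact_mod_cast min_le_right n (τ ω)
    have := (hX0 ▸ hXle n)
    rw [hsplit] at this
    linarith
  -- Step D : ∫ g n → 0 along ℕ
  have htend : Filter.Tendsto (fun k : ℕ => ∫ ω, g (k : ℝ≥0) ω ∂μ)
      Filter.atTop (nhds 0) := by
    have h0 : (0 : ℝ) = ∫ ω, (0 : ℝ) ∂μ := by simp
    rw [h0]
    refine tendsto_integral_of_dominated_convergence
      (fun ω => C * (r + v * (τ ω : ℝ)) + D)
      (fun k => (hgint _).aestronglyMeasurable) ?_ ?_ ?_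
    · -- integrable bound
      have : Integrable (fun ω => C * (r + v * (τ ω : ℝ)) + D) μ := by
        have h1 : Integrable (fun ω => (C * v) * (τ ω : ℝ)) μ := hτint.const_mul _
        have : (fun ω => C * (r + v * (τ ω : ℝ)) + D)
            = fun ω => (C * v) * (τ ω : ℝ) + (C * r + D) := by
          funext ω; ring
        rw [this]
        exact h1.add (integrable_const _)
      exact this
    · -- pointwise bound
      intro k
      filter_upwards [hLip, hR0] with ω hL h0'
      have hRb : R (min (k : ℝ≥0) (τ ω)) ω ≤ r + v * (τ ω : ℝ) := by
        have := hL 0 (min (k : ℝ≥0) (τ ω))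
        rw [h0'] at this
        have habs : R (min (k : ℝ≥0) (τ ω)) ω - r
            ≤ v * |((min (k : ℝ≥0) (τ ω) : ℝ≥0) : ℝ) - (0:ℝ)| :=
          le_trans (le_abs_self _) (by simpa using this)
        have h2 : |((min (k : ℝ≥0) (τ ω) : ℝ≥0) : ℝ) - (0:ℝ)| ≤ (τ ω : ℝ) := by
          rw [sub_zero, abs_of_nonneg (NNReal.coe_nonneg _)]
          exact_mod_cast min_le_right _ _
        nlinarith [hv.le]
      have hnn : 0 ≤ g (k : ℝ≥0) ω := hVnonneg _ _ (hRrange _ _)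
      rw [Real.norm_eq_abs, abs_of_nonneg hnn]
      calc g (k : ℝ≥0) ω ≤ C * R (min (k : ℝ≥0) (τ ω)) ω + D :=
            hc _ _ (hRrange _ _)
        _ ≤ C * (r + v * (τ ω : ℝ)) + D := by nlinarith
    · -- a.e. pointwise convergence to 0
      filter_upwards [hRτ] with ω hτω
      obtain ⟨N, hN⟩ := exists_nat_ge (τ ω)
      refine Filter.Tendsto.congr' ?_ tendsto_const_nhds
      filter_upwards [Filter.eventually_ge_atTop N] with k hk
      have hmin : min (k : ℝ≥0) (τ ω) = τ ω := by
        refine min_eq_right (hN.trans ?_)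
        exact_mod_cast hk
      simp only [hg, hmin, hτω, ha]
  -- conclude
  have hfinal : Vt r θ - ∫ ω, (τ ω : ℝ) ∂μ ≤ 0 := by
    refine ge_of_tendsto' htend fun k => ?_
    have := hkey (k : ℝ≥0)
    linarith
  linarith
end

section
/- Let η ≥ 0, v > 0, and let (Ω, F, (F_t)_{t≥0}, P) be a filtered probability space. Let Ṽ : [η,∞) × ℝ → [0,∞) be a continuous function such that (a) Ṽ(η,θ) = 0 for all θ ∈ ℝ; (b) Ṽ is continuous at r = η uniformly in θ, i.e. for every ε > 0 there is δ > 0 such that Ṽ(r,θ) < ε whenever η ≤ r < η + δ and θ ∈ ℝ; (c) there exist constants C, D ≥ 0 with Ṽ(r,θ) ≤ C·r + D for all (r,θ) ∈ [η,∞) × ℝ. Let (R_t, Θ_t)_{t≥0} be continuous adapted processes with values in [η,∞) × ℝ such that R_0 = r, Θ_0 = θ almost surely and |R_t − R_s| ≤ v·|t − s| for all s, t ≥ 0 almost surely, and let τ be a stopping time with E(τ) < ∞ and R_τ = η almost surely. If the process (t ∧ τ + Ṽ(R_{t∧τ}, Θ_{t∧τ}))_{t≥0} is a martingale with respect to (F_t),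 then Ṽ(r, θ) = E(τ). -/
open MeasureTheory ProbabilityTheory Real
open scoped NNReal

/-- **Verification theorem, part 2 (martingale equality).**
If `Ṽ` is a candidate value function vanishing on the target circle `r = η`,
continuous at `r = η` uniformly in `θ`, of at most linear growth, and if for the
position process `(R, Θ)` of an admissible strategy the process
`t ↦ t ∧ τ + Ṽ(R_{t∧τ}, Θ_{t∧τ})` is a martingale, then `Ṽ(r,θ) = E(τ)`. -/
theorem verification_martingale
    {Ω : Type*} {m : MeasurableSpace Ω} {μ : Measure Ω} [IsProbabilityMeasure μ]
    (ℱ : MeasureTheory.Filtration ℝ≥0 m)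
    (η v : ℝ) (hη : 0 ≤ η) (hv : 0 < v)
    (Vt : ℝ → ℝ → ℝ)
    (hVcont : ContinuousOn (fun p : ℝ × ℝ => Vt p.1 p.2) (Set.Ici η ×ˢ Set.univ))
    (hVnonneg : ∀ r θ : ℝ, η ≤ r → 0 ≤ Vt r θ)
    (ha : ∀ θ : ℝ, Vt η θ = 0)
    (hb : ∀ ε : ℝ, 0 < ε → ∃ δ : ℝ, 0 < δ ∧
      ∀ r θ : ℝ, η ≤ r → r < η + δ → Vt r θ < ε)
    (C D : ℝ) (hC : 0 ≤ C) (hD : 0 ≤ D)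
    (hc : ∀ r θ : ℝ, η ≤ r → Vt r θ ≤ C * r + D)
    (R Θ : ℝ≥0 → Ω → ℝ)
    (hRcont : ∀ ω, Continuous fun t => R t ω)
    (hΘcont : ∀ ω, Continuous fun t => Θ t ω)
    (hRadapted : Adapted ℱ R) (hΘadapted : Adapted ℱ Θ)
    (hRrange : ∀ t ω, η ≤ R t ω)
    (r θ : ℝ) (hr : η ≤ r)
    (hR0 : ∀ᵐ ω ∂μ, R 0 ω = r) (hΘ0 : ∀ᵐ ω ∂μ, Θ 0 ω = θ)
    (hLip : ∀ᵐ ω ∂μ, ∀ s t : ℝ≥0, |R t ω - R s ω| ≤ v * |(t : ℝ) - (s : ℝ)|)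
    (τ : Ω → ℝ≥0) (hτ : IsStoppingTime ℱ (fun ω => (τ ω : WithTop ℝ≥0)))
    (hτint : Integrable (fun ω => (τ ω : ℝ)) μ)
    (hRτ : ∀ᵐ ω ∂μ, R (τ ω) ω = η)
    (hmart : Martingale
      (fun (t : ℝ≥0) ω => ((min t (τ ω) : ℝ≥0) : ℝ) + Vt (R (min t (τ ω)) ω) (Θ (min t (τ ω)) ω)) ℱ μ) :
    Vt r θ = ∫ ω, (τ ω : ℝ) ∂μ := by

  set Y : ℝ≥0 → Ω → ℝ := fun t ω => ((min t (τ ω) : ℝ≥0) : ℝ) +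
    Vt (R (min t (τ ω)) ω) (Θ (min t (τ ω)) ω) with hY
  -- the martingale has constant expectation
  have hint : ∀ t : ℝ≥0, ∫ ω, Y t ω ∂μ = ∫ ω, Y 0 ω ∂μ := by
    intro t
    have h := hmart.2 0 t zero_le
    calc ∫ ω, Y t ω ∂μ = ∫ ω, (μ[Y t | ℱ 0]) ω ∂μ := (integral_condExp (ℱ.le 0)).symm
    _ = ∫ ω, Y 0 ω ∂μ := integral_congr_ae h
  have hY0 : ∫ ω, Y 0 ω ∂μ = Vt r θ := by
    have hae : ∀ᵐ ω ∂μ, Y 0 ω = Vt r θ := by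
      filter_upwards [hR0, hΘ0] with ω h1 h2
      have hmin : min (0:ℝ≥0) (τ ω) = 0 := min_eq_left zero_le
      simp [hY, hmin, h1, h2]
    rw [integral_congr_ae hae, integral_const]
    simp
  -- dominating function
  set g : Ω → ℝ := fun ω => (τ ω : ℝ) + (C * (r + v * (τ ω : ℝ)) + D) with hg
  have hgint : Integrable g μ := by
    apply Integrable.add hτint
    exact (((integrable_const r).add (hτint.const_mul v)).const_mul C).add (integrable_const D)
  have hbound : ∀ n : ℕ, ∀ᵐ ω ∂μ, ‖Y (n : ℝ≥0) ω‖ ≤ g ω := by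
    intro n
    filter_upwards [hR0, hLip] with ω h0 hlip
    simp only [hY, hg]
    set s : ℝ≥0 := min (n : ℝ≥0) (τ ω) with hs
    have hs1 : (s : ℝ) ≤ (τ ω : ℝ) := by exact_mod_cast min_le_right (n : ℝ≥0) (τ ω)
    have hs0 : (0:ℝ) ≤ (s : ℝ) := s.coe_nonneg
    have hRs : R s ω ≤ r + v * (τ ω : ℝ) := by
      have h2 : |R s ω - R 0 ω| ≤ v * (s : ℝ) := by
        have := hlip 0 s
        simpa [abs_of_nonneg hs0] using this
      have h3 := (abs_le.mp h2).2
      nlinarith [hv.le]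
    have hnn : (0:ℝ) ≤ (s : ℝ) + Vt (R s ω) (Θ s ω) :=
      add_nonneg hs0 (hVnonneg _ _ (hRrange _ _))
    rw [Real.norm_eq_abs, abs_of_nonneg hnn]
    have hV : Vt (R s ω) (Θ s ω) ≤ C * R s ω + D := hc _ _ (hRrange _ _)
    have hCR : C * R s ω ≤ C * (r + v * (τ ω : ℝ)) := mul_le_mul_of_nonneg_left hRs hC
    linarith
  have hconv : ∀ᵐ ω ∂μ, Filter.Tendsto (fun n : ℕ => Y (n : ℝ≥0) ω)
      Filter.atTop (nhds ((τ ω : ℝ))) := by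
    filter_upwards [hRτ] with ω hτω
    apply Filter.Tendsto.congr' _ (tendsto_const_nhds (x := (τ ω : ℝ)))
    filter_upwards [Filter.eventually_ge_atTop (⌈(τ ω : ℝ)⌉₊)] with n hn
    have hle : τ ω ≤ (n : ℝ≥0) := by
      have h1 : (τ ω : ℝ) ≤ (n : ℝ) := le_trans (Nat.le_ceil _) (by exact_mod_cast hn)
      exact_mod_cast h1
    have hmin : min (n : ℝ≥0) (τ ω) = τ ω := min_eq_right hle
    simp [hY, hmin, hτω, ha]
    exact_mod_cast hle
  have h1 : Filter.Tendsto (fun n : ℕ => ∫ ω, Y (n : ℝ≥0) ω ∂μ)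
      Filter.atTop (nhds (∫ ω, (τ ω : ℝ) ∂μ)) :=
    tendsto_integral_of_dominated_convergence g
      (fun n => (hmart.integrable (n : ℝ≥0)).aestronglyMeasurable) hgint hbound hconv
  have h2 : Filter.Tendsto (fun n : ℕ => ∫ ω, Y (n : ℝ≥0) ω ∂μ)
      Filter.atTop (nhds (Vt r θ)) := by
    simp only [hint, hY0]
    exact tendsto_const_nhds
  exact tendsto_nhds_unique h2 h1
end

section
/- Let α ∈ (0, π/8], v > 0 and R_ζ > 0, and set d₁ = sin(α/2) tan α + 1. Let β : [0,∞) → ℝ be a continuous function with |β_t| < α/2 for all t ≥ 0, and define Y_t = sin(β_t)·R_ζ sin α + cos(β_t)·R_ζ cos α − v ∫₀^t cos(β_t − β_s) ds for t ≥ 0. If T ≥ 0 satisfies Y_T = 0, then cos(3α/2)·R_ζ < T v < d₁·R_ζ. -/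
open Real

/-- **Bounds on the axis-crossing time of a boat beating upwind in a calm wind.**
A boat on starboard tack starting at `(Rζ sin α, Rζ cos α)` in a wind whose
direction `β` never deviates by more than `α/2` crosses the horizontal axis
(`Y_T = 0`) at a time `T` satisfying `cos(3α/2)·Rζ < T v < d₁·Rζ`,
where `d₁ = sin(α/2) tan α + 1`. -/
theorem crossing_time_bounds
    (α v Rζ : ℝ) (hα : α ∈ Set.Ioc 0 (π / 8)) (hv : 0 < v) (hRζ : 0 < Rζ)
    (d₁ : ℝ) (hd₁ : d₁ = Real.sin (α / 2) * Real.tan α + 1)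
    (β : ℝ → ℝ) (hβcont : Continuous β) (hβ : ∀ t : ℝ, 0 ≤ t → |β t| < α / 2)
    (Y : ℝ → ℝ)
    (hY : ∀ t : ℝ, Y t =
      Real.sin (β t) * (Rζ * Real.sin α) + Real.cos (β t) * (Rζ * Real.cos α)
        - v * ∫ s in (0:ℝ)..t, Real.cos (β t - β s))
    (T : ℝ) (hT : 0 ≤ T) (hYT : Y T = 0) :
    Real.cos (3 * α / 2) * Rζ < T * v ∧ T * v < d₁ * Rζ := by
  obtain ⟨hα0, hα8⟩ := hα
  have hπ : (0:ℝ) < π := Real.pi_pos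
  have h32 : 3 * α / 2 ≤ π / 2 := by linarith
  have hcosα : 0 < Real.cos α :=
    Real.cos_pos_of_mem_Ioo ⟨by linarith, by linarith⟩
  have hβT := abs_lt.mp (hβ T hT)
  have hθ1 : α / 2 < α - β T := by linarith [hβT.2]
  have hθ2 : α - β T < 3 * α / 2 := by linarith [hβT.1]
  have hcont : Continuous fun s => Real.cos (β T - β s) :=
    Real.continuous_cos.comp (continuous_const.sub hβcont)
  set I : ℝ := ∫ s in (0:ℝ)..T, Real.cos (β T - β s) with hI
  have hmain : v * I = Rζ * Real.cos (α - β T) := by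
    have h := hY T
    rw [hYT] at h
    rw [← hI] at h
    rw [Real.cos_sub]
    linear_combination h
  have hIle : I ≤ T := by
    have h1 : I ≤ ∫ s in (0:ℝ)..T, (1:ℝ) := by
      apply intervalIntegral.integral_mono_on hT
        (hcont.intervalIntegrable 0 T) intervalIntegrable_const
      intro s _; exact Real.cos_le_one _
    simpa using h1
  have hIge : Real.cos α * T ≤ I := by
    have h1 : (∫ _ in (0:ℝ)..T, Real.cos α) ≤ I := by
      apply intervalIntegral.integral_mono_on hT
        intervalIntegrable_const (hcont.intervalIntegrable 0 T)
      intro s hs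
      have hβs := abs_lt.mp (hβ s hs.1)
      have habs : |β T - β s| ≤ α := by
        calc |β T - β s| ≤ |β T| + |β s| := abs_sub _ _
          _ ≤ α := by
            have := abs_lt.mpr hβT
            have := abs_lt.mpr hβs
            linarith [abs_lt.mp (hβ T hT), abs_lt.mp (hβ s hs.1)]
      rw [← Real.cos_abs (β T - β s)]
      exact Real.cos_le_cos_of_nonneg_of_le_pi (abs_nonneg _) (by linarith) habs
    simpa [mul_comm] using h1
  have hlow : Real.cos (3 * α / 2) < Real.cos (α - β T) :=
    Real.cos_lt_cos_of_nonneg_of_le_pi (by linarith) (by linarith) hθ2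
  have hhigh : Real.cos (α - β T) < Real.cos (α / 2) :=
    Real.cos_lt_cos_of_nonneg_of_le_pi (by linarith) (by linarith) hθ1
  constructor
  · nlinarith [mul_le_mul_of_nonneg_left hIle hv.le]
  · have hc1 : Real.cos (α / 2) < 1 := by
      have := Real.cos_lt_cos_of_nonneg_of_le_pi (le_refl 0) (by linarith) (by linarith : (0:ℝ) < α / 2)
      simpa using this
    have hkey : Real.cos (α / 2) < d₁ * Real.cos α := by
      have hsinα : Real.sin α = 2 * Real.sin (α / 2) * Real.cos (α / 2) := by
        have h2 := Real.sin_two_mul (α / 2)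
        rwa [show 2 * (α / 2) = α by ring] at h2
      have hcos2 : Real.cos α = 1 - 2 * Real.sin (α / 2) ^ 2 := by
        have h2 := Real.cos_two_mul' (α / 2)
        rw [show 2 * (α / 2) = α by ring] at h2
        have hp := Real.sin_sq_add_cos_sq (α / 2)
        linarith
      have htan : Real.tan α * Real.cos α = Real.sin α := by
        rw [Real.tan_eq_sin_div_cos]; field_simp
      have hd : d₁ * Real.cos α = Real.sin (α / 2) * Real.sin α + Real.cos α := by
        rw [hd₁]; linear_combination Real.sin (α / 2) * htan
      have hpos : 0 < 1 - 2 * Real.sin (α / 2) ^ 2 := by rw [← hcos2]; exact hcosα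
      rw [hd, hsinα, hcos2]
      nlinarith [mul_pos (sub_pos.mpr hc1) hpos]
    nlinarith [mul_le_mul_of_nonneg_left hIge hv.le]
end

section
/- Let α ∈ (0, π/8], v > 0 and R₀ > 0, and set d₂ = (sin(α/2) + tan α)·cos α / cos(2α). Let β : [0,∞) → ℝ be a continuous function with |β_t| < α/2 for all t ≥ 0, and define X_t = cos(β_t)·R₀ + v ∫₀^t sin(β_t − β_s) ds and Y_t = sin(β_t)·R₀ − v ∫₀^t cos(β_t − β_s) ds for t ≥ 0. Then: (i) X_t ≤ R₀ + t v sin α for all t ≥ 0; (ii) −sin(α/2)·R₀ − t v ≤ Y_t ≤ sin(α/2)·R₀ − t v cos α for all t ≥ 0; and (iii) if t ≥ 0 is such that X_t tan α + Y_t > 0, then t ≤ d₂·R₀ / v. -/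
open Real

lemma sl_int_le (t C : ℝ) (ht : 0 ≤ t) {f : ℝ → ℝ} (hf : Continuous f)
    (h : ∀ s ∈ Set.Icc 0 t, f s ≤ C) : ∫ s in (0:ℝ)..t, f s ≤ t * C := by
  have := intervalIntegral.integral_mono_on ht (hf.intervalIntegrable 0 t)
    ((intervalIntegrable_const : IntervalIntegrable (fun _ => C) MeasureTheory.volume 0 t)) h
  simpa using this

lemma sl_int_ge (t C : ℝ) (ht : 0 ≤ t) {f : ℝ → ℝ} (hf : Continuous f)
    (h : ∀ s ∈ Set.Icc 0 t, C ≤ f s) : t * C ≤ ∫ s in (0:ℝ)..t, f s := by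
  have := intervalIntegral.integral_mono_on ht ((intervalIntegrable_const : IntervalIntegrable (fun _ => C) MeasureTheory.volume 0 t))
    (hf.intervalIntegrable 0 t) h
  simpa using this

lemma sl_sin_le {x a : ℝ} (h : |x| ≤ a) (ha : a ≤ π / 2) : Real.sin x ≤ Real.sin a := by
  have h0 : 0 ≤ a := le_trans (abs_nonneg x) h
  have hx1 : -(π/2) ≤ x := by
    have := neg_abs_le x; linarith [abs_le.mp (h.trans ha) ]
  have hx2 : x ≤ π/2 := le_trans (le_trans (le_abs_self x) h) ha
  exact Real.strictMonoOn_sin.monotoneOn ⟨hx1, hx2⟩ ⟨by linarith, ha⟩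
    (le_trans (le_abs_self x) h)

lemma sl_cos_ge {x a : ℝ} (h : |x| ≤ a) (ha : a ≤ π) : Real.cos a ≤ Real.cos x := by
  rw [← Real.cos_abs x]
  exact Real.cos_le_cos_of_nonneg_of_le_pi (abs_nonneg x) ha h

/-- **Bounds for the second leg of the strategy, starting on the positive `x`-axis.**
A boat on starboard tack starting at `(R₀, 0)` in a wind whose direction `β` never
deviates by more than `α/2` satisfies `X_t ≤ R₀ + t v sin α`,
`−sin(α/2) R₀ − t v ≤ Y_t ≤ sin(α/2) R₀ − t v cos α`, and remains above the line
`y = −x tan α` for at most time `d₂ R₀ / v`, where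
`d₂ = (sin(α/2) + tan α) cos α / cos(2α)`. -/
theorem second_leg_bounds
    (α v R₀ : ℝ) (hα : α ∈ Set.Ioc 0 (π / 8)) (hv : 0 < v) (hR₀ : 0 < R₀)
    (d₂ : ℝ) (hd₂ : d₂ = (Real.sin (α / 2) + Real.tan α) * Real.cos α / Real.cos (2 * α))
    (β : ℝ → ℝ) (hβcont : Continuous β) (hβ : ∀ t : ℝ, 0 ≤ t → |β t| < α / 2)
    (X Y : ℝ → ℝ)
    (hX : ∀ t : ℝ, X t = Real.cos (β t) * R₀ + v * ∫ s in (0:ℝ)..t, Real.sin (β t - β s))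
    (hY : ∀ t : ℝ, Y t = Real.sin (β t) * R₀ - v * ∫ s in (0:ℝ)..t, Real.cos (β t - β s)) :
    (∀ t : ℝ, 0 ≤ t → X t ≤ R₀ + t * v * Real.sin α) ∧
    (∀ t : ℝ, 0 ≤ t →
      -Real.sin (α / 2) * R₀ - t * v ≤ Y t ∧ Y t ≤ Real.sin (α / 2) * R₀ - t * v * Real.cos α) ∧
    (∀ t : ℝ, 0 ≤ t → 0 < X t * Real.tan α + Y t → t ≤ d₂ * R₀ / v) := by
  obtain ⟨hα0, hα8⟩ := hα
  have hπ : (0:ℝ) < π := Real.pi_pos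
  have hα2 : α < π / 2 := by linarith
  have hc : 0 < Real.cos α := Real.cos_pos_of_mem_Ioo ⟨by linarith, hα2⟩
  have hs : 0 < Real.sin α := Real.sin_pos_of_pos_of_lt_pi hα0 (by linarith)
  have htan : 0 < Real.tan α := Real.tan_pos_of_pos_of_lt_pi_div_two hα0 hα2
  have hc2 : 0 < Real.cos (2 * α) := Real.cos_pos_of_mem_Ioo ⟨by linarith, by linarith⟩
  have habs : ∀ t s : ℝ, 0 ≤ t → s ∈ Set.Icc (0:ℝ) t → |β t - β s| ≤ α := by
    intro t s ht hst
    have h1 := hβ t ht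
    have h2 := hβ s hst.1
    calc |β t - β s| ≤ |β t| + |β s| := abs_sub _ _
      _ ≤ α := by linarith
  have part1 : ∀ t : ℝ, 0 ≤ t → X t ≤ R₀ + t * v * Real.sin α := by
    intro t ht
    rw [hX t]
    have h1 : Real.cos (β t) * R₀ ≤ R₀ := by
      nlinarith [Real.cos_le_one (β t)]
    have h2 : ∫ s in (0:ℝ)..t, Real.sin (β t - β s) ≤ t * Real.sin α := by
      apply sl_int_le t _ ht
      · exact Real.continuous_sin.comp (continuous_const.sub hβcont)
      · intro s hst
        exact sl_sin_le (habs t s ht hst) (le_of_lt hα2)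
    nlinarith
  have part2 : ∀ t : ℝ, 0 ≤ t →
      -Real.sin (α / 2) * R₀ - t * v ≤ Y t ∧
      Y t ≤ Real.sin (α / 2) * R₀ - t * v * Real.cos α := by
    intro t ht
    have hbt := hβ t ht
    have hsinb : Real.sin (β t) ≤ Real.sin (α / 2) :=
      sl_sin_le (le_of_lt hbt) (by linarith)
    have hsinb' : -Real.sin (α / 2) ≤ Real.sin (β t) := by
      have := sl_sin_le (x := -β t) (by simpa using le_of_lt hbt) (by linarith : α/2 ≤ π/2)
      rw [Real.sin_neg] at this; linarith
    have hcont : Continuous (fun s => Real.cos (β t - β s)) :=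
      Real.continuous_cos.comp (continuous_const.sub hβcont)
    have hiu : ∫ s in (0:ℝ)..t, Real.cos (β t - β s) ≤ t * 1 := by
      apply sl_int_le t _ ht hcont
      intro s _; exact Real.cos_le_one _
    have hil : t * Real.cos α ≤ ∫ s in (0:ℝ)..t, Real.cos (β t - β s) := by
      apply sl_int_ge t _ ht hcont
      intro s hst
      exact sl_cos_ge (habs t s ht hst) (by linarith)
    rw [hY t]
    constructor
    · nlinarith
    · nlinarith
  refine ⟨part1, part2, ?_⟩
  intro t ht hpos
  have hXb := part1 t ht
  have hYb := (part2 t ht).2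
  have hmc : Real.tan α * Real.cos α = Real.sin α := Real.tan_mul_cos hc.ne'
  have hkey : 0 < X t * Real.sin α + Y t * Real.cos α := by
    have h1 : X t * Real.sin α + Y t * Real.cos α
        = (X t * Real.tan α + Y t) * Real.cos α := by rw [← hmc]; ring
    rw [h1]; exact mul_pos hpos hc
  have hXs : X t * Real.sin α ≤ (R₀ + t * v * Real.sin α) * Real.sin α :=
    mul_le_mul_of_nonneg_right hXb hs.le
  have hYc : Y t * Real.cos α ≤ (Real.sin (α/2) * R₀ - t * v * Real.cos α) * Real.cos α :=
    mul_le_mul_of_nonneg_right hYb hc.le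
  have h2c : Real.cos (2 * α) = Real.cos α ^ 2 - Real.sin α ^ 2 := Real.cos_two_mul' α
  have hlt : t * v * Real.cos (2 * α) < (Real.sin (α/2) * Real.cos α + Real.sin α) * R₀ := by
    rw [h2c]; nlinarith
  have hnum : (Real.sin (α / 2) + Real.tan α) * Real.cos α
      = Real.sin (α/2) * Real.cos α + Real.sin α := by
    rw [Real.tan_eq_sin_div_cos]; field_simp
  rw [hd₂, hnum, div_mul_eq_mul_div, div_div, le_div_iff₀ (by positivity)]
  nlinarith
end

section
/- Let v > 0, η > 0 and let n be a positive integer with 1/n < η. With μ₁*, μ₂* and φ_n defined as in the context, there exists a constant C ≥ 0 such that for all r₁, r₂ > 0 and all θ₁, θ₂ ∈ ℝ: (r₁ − r₂)·(φ_n(r₁)μ₁*(θ₁) − φ_n(r₂)μ₁*(θ₂)) + (θ₁ − θ₂)·(φ_n(r₁)μ₂*(r₁,θ₁) − φ_n(r₂)μ₂*(r₂,θ₂)) ≤ C·((r₁ − r₂)² + (θ₁ − θ₂)²). -/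
open Real

/-- Reduce an angle to the base interval `[-π/4, 7π/4)`. -/
noncomputable def wrapBase (θ : ℝ) : ℝ := toIcoMod Real.two_pi_pos (-(π / 4)) θ

/-- Radial drift on starboard tack (`a = +1`), `2π`-periodic in `θ`. -/
noncomputable def mu1plus (v θ : ℝ) : ℝ :=
  if wrapBase θ < π / 2 then -v * Real.sin (wrapBase θ)
  else if wrapBase θ < π then -v
  else v * Real.cos (wrapBase θ)

/-- Angular drift on starboard tack (`a = +1`), `2π`-periodic in `θ`. -/
noncomputable def mu2plus (v r θ : ℝ) : ℝ :=
  if wrapBase θ < π / 2 then -v * Real.cos (wrapBase θ) / r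
  else if wrapBase θ < π then 0
  else -v * Real.sin (wrapBase θ) / r

/-- Radial drift on port tack (`a = −1`), `2π`-periodic in `θ`. -/
noncomputable def mu1minus (v θ : ℝ) : ℝ :=
  if wrapBase θ < 0 then -v
  else if wrapBase θ < 3 * π / 4 then -v * Real.cos (wrapBase θ)
  else if wrapBase θ < 3 * π / 2 then v * Real.sin (wrapBase θ)
  else -v

/-- Angular drift on port tack (`a = −1`), `2π`-periodic in `θ`. -/
noncomputable def mu2minus (v r θ : ℝ) : ℝ :=
  if wrapBase θ < 0 then 0
  else if wrapBase θ < 3 * π / 4 then v * Real.sin (wrapBase θ) / r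
  else if wrapBase θ < 3 * π / 2 then v * Real.cos (wrapBase θ) / r
  else 0

/-- Reduce an angle to the interval `[-3π/4, 5π/4)`. -/
noncomputable def wrapStar (θ : ℝ) : ℝ := toIcoMod Real.two_pi_pos (-(3 * π / 4)) θ

/-- Radial drift of the candidate optimal feedback strategy: starboard for
`θ ∈ [π/4, 5π/4)`, port for `θ ∈ [−3π/4, π/4)`, extended `2π`-periodically. -/
noncomputable def mu1star (v θ : ℝ) : ℝ :=
  if wrapStar θ < π / 4 then mu1minus v (wrapStar θ) else mu1plus v (wrapStar θ)

/-- Angular drift of the candidate optimal feedback strategy: starboard for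
`θ ∈ [π/4, 5π/4)`, port for `θ ∈ [−3π/4, π/4)`, extended `2π`-periodically. -/
noncomputable def mu2star (v r θ : ℝ) : ℝ :=
  if wrapStar θ < π / 4 then mu2minus v r (wrapStar θ) else mu2plus v r (wrapStar θ)

/-- The damping function `φ_n`: `0` on `[0, η − 1/n]`, linear on `(η − 1/n, η)`,
and `1` on `[η, ∞)`. -/
noncomputable def phiDamp (η : ℝ) (n : ℕ) (r : ℝ) : ℝ :=
  if r ≤ η - 1 / n then 0 else if r < η then n * (r - η) + 1 else 1


namespace SailAux

/-- Reduce an angle to `[0, π)`. -/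
noncomputable def wrapPi (θ : ℝ) : ℝ := toIcoMod Real.pi_pos 0 θ

lemma wrapPi_mem (θ : ℝ) : wrapPi θ ∈ Set.Ico 0 π := by
  simpa [wrapPi] using toIcoMod_mem_Ico Real.pi_pos 0 θ

lemma wrapPi_eq_self {x : ℝ} (h1 : 0 ≤ x) (h2 : x < π) : wrapPi x = x :=
  (toIcoMod_eq_self _).2 ⟨h1, by simpa using h2⟩

lemma wrapPi_shift (x : ℝ) (k : ℤ) : wrapPi (x + k * π) = wrapPi x := by
  have h := toIcoMod_add_zsmul Real.pi_pos 0 x k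
  rw [zsmul_eq_mul] at h
  exact h

/-- radial direction component (π-periodic). -/
noncomputable def c0 (θ : ℝ) : ℝ :=
  if wrapPi θ < π / 4 then Real.cos (wrapPi θ)
  else if wrapPi θ < π / 2 then Real.sin (wrapPi θ) else 1

/-- tangential direction component (π-periodic). -/
noncomputable def s0 (θ : ℝ) : ℝ :=
  if wrapPi θ < π / 4 then Real.sin (wrapPi θ)
  else if wrapPi θ < π / 2 then -Real.cos (wrapPi θ) else 0

lemma c0_shift (x : ℝ) (k : ℤ) : c0 (x + k * π) = c0 x := by
  unfold c0; rw [wrapPi_shift]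

lemma s0_shift (x : ℝ) (k : ℤ) : s0 (x + k * π) = s0 x := by
  unfold s0; rw [wrapPi_shift]

lemma c0_eval1 {x : ℝ} (h1 : 0 ≤ x) (h2 : x < π / 4) : c0 x = Real.cos x := by
  have hπ := Real.pi_gt_three
  rw [c0, wrapPi_eq_self h1 (by linarith), if_pos h2]

lemma c0_eval2 {x : ℝ} (h1 : π / 4 ≤ x) (h2 : x < π / 2) : c0 x = Real.sin x := by
  have hπ := Real.pi_gt_three
  rw [c0, wrapPi_eq_self (by linarith) (by linarith), if_neg (by linarith), if_pos h2]

lemma c0_eval3 {x : ℝ} (h1 : π / 2 ≤ x) (h2 : x < π) : c0 x = 1 := by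
  have hπ := Real.pi_gt_three
  rw [c0, wrapPi_eq_self (by linarith) h2, if_neg (by linarith), if_neg (by linarith)]

lemma s0_eval1 {x : ℝ} (h1 : 0 ≤ x) (h2 : x < π / 4) : s0 x = Real.sin x := by
  have hπ := Real.pi_gt_three
  rw [s0, wrapPi_eq_self h1 (by linarith), if_pos h2]

lemma s0_eval2 {x : ℝ} (h1 : π / 4 ≤ x) (h2 : x < π / 2) : s0 x = -Real.cos x := by
  have hπ := Real.pi_gt_three
  rw [s0, wrapPi_eq_self (by linarith) (by linarith), if_neg (by linarith), if_pos h2]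

lemma s0_eval3 {x : ℝ} (h1 : π / 2 ≤ x) (h2 : x < π) : s0 x = 0 := by
  have hπ := Real.pi_gt_three
  rw [s0, wrapPi_eq_self (by linarith) h2, if_neg (by linarith), if_neg (by linarith)]

lemma c0_eval4 {x : ℝ} (h1 : π ≤ x) (h2 : x < 5 * π / 4) : c0 x = -Real.cos x := by
  have hπ := Real.pi_gt_three
  have h := c0_shift (x - π) 1
  rw [show (x - π) + ((1 : ℤ) : ℝ) * π = x by push_cast; ring] at h
  rw [h, c0_eval1 (by linarith) (by linarith), Real.cos_sub_pi]

lemma c0_bounds (θ : ℝ) : 0 ≤ c0 θ ∧ c0 θ ≤ 1 := by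
  have hπ := Real.pi_gt_three
  obtain ⟨hw0, hwπ⟩ := wrapPi_mem θ
  unfold c0
  split_ifs with h1 h2
  · exact ⟨Real.cos_nonneg_of_mem_Icc ⟨by linarith, by linarith⟩, Real.cos_le_one _⟩
  · exact ⟨Real.sin_nonneg_of_nonneg_of_le_pi hw0 (by linarith), Real.sin_le_one _⟩
  · norm_num

lemma s0_bounds (θ : ℝ) : -1 ≤ s0 θ ∧ s0 θ ≤ 1 := by
  unfold s0
  split_ifs
  · exact ⟨Real.neg_one_le_sin _, Real.sin_le_one _⟩
  · constructor <;> nlinarith [Real.neg_one_le_cos (wrapPi θ), Real.cos_le_one (wrapPi θ)]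
  · norm_num

lemma sin_lip (x y : ℝ) : |Real.sin x - Real.sin y| ≤ |x - y| := by
  rw [Real.sin_sub_sin, abs_mul, abs_mul]
  have h1 := Real.abs_sin_le_abs (x := (x - y) / 2)
  have h2 := Real.abs_cos_le_one ((x + y) / 2)
  have h3 : |(x - y) / 2| = |x - y| / 2 := by rw [abs_div]; norm_num
  rw [h3] at h1
  have h4 : |(2:ℝ)| = 2 := by norm_num
  rw [h4]
  nlinarith [abs_nonneg (Real.sin ((x - y) / 2)), abs_nonneg (x - y)]

lemma cos_lip (x y : ℝ) : |Real.cos x - Real.cos y| ≤ |x - y| := by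
  rw [Real.cos_sub_cos, abs_mul, abs_mul]
  have h1 := Real.abs_sin_le_abs (x := (x - y) / 2)
  have h2 := Real.abs_sin_le_one ((x + y) / 2)
  have h3 : |(x - y) / 2| = |x - y| / 2 := by rw [abs_div]; norm_num
  rw [h3] at h1
  have h4 : |(-2:ℝ)| = 2 := by norm_num
  rw [h4]
  nlinarith [abs_nonneg (Real.sin ((x - y) / 2)), abs_nonneg (x - y), abs_nonneg (Real.sin ((x+y)/2))]


lemma s0_eval4 {x : ℝ} (h1 : π ≤ x) (h2 : x < 5 * π / 4) : s0 x = -Real.sin x := by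
  have hπ := Real.pi_gt_three
  have h := s0_shift (x - π) 1
  rw [show (x - π) + ((1 : ℤ) : ℝ) * π = x by push_cast; ring] at h
  rw [h, s0_eval1 (by linarith) (by linarith), Real.sin_sub_pi]

lemma reduceAux {x y : ℝ} (hxy : y ≤ x) :
    c0 x = c0 (wrapPi y + (x - y)) ∧ c0 y = c0 (wrapPi y) ∧
    s0 x = s0 (wrapPi y + (x - y)) ∧ s0 y = s0 (wrapPi y) := by
  have hkey : y - wrapPi y = toIcoDiv Real.pi_pos 0 y • π := self_sub_toIcoMod Real.pi_pos 0 y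
  rw [zsmul_eq_mul] at hkey
  have hx : x = (wrapPi y + (x - y)) + (toIcoDiv Real.pi_pos 0 y : ℤ) * π := by
    rw [← hkey]; ring
  have hy : y = wrapPi y + (toIcoDiv Real.pi_pos 0 y : ℤ) * π := by
    rw [← hkey]; ring
  refine ⟨?_, ?_, ?_, ?_⟩
  · conv_lhs => rw [hx]
    rw [c0_shift]
  · conv_lhs => rw [hy]
    rw [c0_shift]
  · conv_lhs => rw [hx]
    rw [s0_shift]
  · conv_lhs => rw [hy]
    rw [s0_shift]

lemma c0_diff_le {x y : ℝ} (hxy : y ≤ x) : |c0 x - c0 y| ≤ 8 * (x - y) := by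
  have hπ := Real.pi_gt_three
  by_cases hbig : (1:ℝ)/8 ≤ x - y
  · have b1 := c0_bounds x; have b2 := c0_bounds y
    rw [abs_le]; constructor <;> linarith [b1.1, b1.2, b2.1, b2.2]
  · push_neg at hbig
    have hd0 : 0 ≤ x - y := by linarith
    obtain ⟨hw0, hwπ⟩ := wrapPi_mem y
    obtain ⟨hcx, hcy, -, -⟩ := reduceAux hxy
    rw [hcx, hcy]
    set d := x - y with hd
    set w' := wrapPi y with hw'
    set w := w' + d with hww
    have hw'w : w' ≤ w := by rw [hww]; linarith
    rcases lt_or_ge w' (π/4) with h1 | h1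
    · rcases lt_or_ge w (π/4) with h2 | h2
      · rw [c0_eval1 (by linarith) h2, c0_eval1 hw0 h1]
        calc |Real.cos w - Real.cos w'| ≤ |w - w'| := cos_lip w w'
          _ = d := by rw [hww, abs_of_nonneg] <;> [skip; linarith] <;> ring_nf
          _ ≤ 8 * d := by linarith
      · have hw2 : w < π/2 := by rw [hww]; linarith
        rw [c0_eval2 h2 hw2, c0_eval1 hw0 h1, ← Real.sin_pi_div_two_sub w']
        calc |Real.sin w - Real.sin (π/2 - w')| ≤ |w - (π/2 - w')| := sin_lip _ _
          _ ≤ d := by rw [abs_le]; constructor <;> [linarith; linarith]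
          _ ≤ 8 * d := by linarith
    · rcases lt_or_ge w' (π/2) with h2 | h2
      · rcases lt_or_ge w (π/2) with h3 | h3
        · rw [c0_eval2 (by linarith) h3, c0_eval2 h1 h2]
          calc |Real.sin w - Real.sin w'| ≤ |w - w'| := sin_lip _ _
            _ ≤ d := by rw [abs_le]; constructor <;> linarith
            _ ≤ 8 * d := by linarith
        · have hw3 : w < π := by rw [hww]; linarith
          rw [c0_eval3 h3 hw3, c0_eval2 h1 h2, ← Real.sin_pi_div_two]
          calc |Real.sin (π/2) - Real.sin w'| ≤ |π/2 - w'| := sin_lip _ _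
            _ ≤ d := by rw [abs_le]; constructor <;> linarith
            _ ≤ 8 * d := by linarith
      · rcases lt_or_ge w π with h3 | h3
        · rw [c0_eval3 (by linarith) h3, c0_eval3 h2 hwπ]
          simpa using by positivity
        · have hw4 : w < 5*π/4 := by rw [hww]; linarith
          rw [c0_eval4 h3 hw4, c0_eval3 h2 hwπ, show -Real.cos w = Real.cos (w - π) from (Real.cos_sub_pi w).symm,
            show (1:ℝ) = Real.cos 0 from Real.cos_zero.symm]
          calc |Real.cos (w - π) - Real.cos 0| ≤ |w - π - 0| := cos_lip _ _
            _ ≤ d := by rw [abs_le]; constructor <;> linarith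
            _ ≤ 8 * d := by linarith

lemma c0_diff (x y : ℝ) : |c0 x - c0 y| ≤ 8 * |x - y| := by
  rcases le_total y x with h | h
  · calc |c0 x - c0 y| ≤ 8 * (x - y) := c0_diff_le h
      _ ≤ 8 * |x - y| := by nlinarith [le_abs_self (x - y)]
  · rw [abs_sub_comm]
    calc |c0 y - c0 x| ≤ 8 * (y - x) := c0_diff_le h
      _ ≤ 8 * |x - y| := by nlinarith [neg_abs_le (x - y)]

lemma s0_one_sided {x y : ℝ} (hxy : y ≤ x) : s0 x - s0 y ≤ 8 * (x - y) := by
  have hπ := Real.pi_gt_three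
  by_cases hbig : (1:ℝ)/4 ≤ x - y
  · have b1 := s0_bounds x; have b2 := s0_bounds y
    linarith [b1.1, b1.2, b2.1, b2.2]
  · push_neg at hbig
    have hd0 : 0 ≤ x - y := by linarith
    obtain ⟨hw0, hwπ⟩ := wrapPi_mem y
    obtain ⟨-, -, hsx, hsy⟩ := reduceAux hxy
    rw [hsx, hsy]
    set d := x - y with hd
    set w' := wrapPi y with hw'
    set w := w' + d with hww
    have hw'w : w' ≤ w := by rw [hww]; linarith
    rcases lt_or_ge w' (π/4) with h1 | h1
    · rcases lt_or_ge w (π/4) with h2 | h2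
      · rw [s0_eval1 (by linarith) h2, s0_eval1 hw0 h1]
        have h := sin_lip w w'
        have : |w - w'| ≤ d := by rw [abs_le]; constructor <;> linarith
        have h2' := le_abs_self (Real.sin w - Real.sin w')
        linarith
      · have hw2 : w < π/2 := by rw [hww]; linarith
        rw [s0_eval2 h2 hw2, s0_eval1 hw0 h1]
        have hc : 0 ≤ Real.cos w := Real.cos_nonneg_of_mem_Icc ⟨by linarith, by linarith⟩
        have hs : 0 ≤ Real.sin w' := Real.sin_nonneg_of_nonneg_of_le_pi hw0 (by linarith)
        linarith
    · rcases lt_or_ge w' (π/2) with h2 | h2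
      · rcases lt_or_ge w (π/2) with h3 | h3
        · rw [s0_eval2 (by linarith) h3, s0_eval2 h1 h2]
          have h := cos_lip w' w
          have : |w' - w| ≤ d := by rw [abs_le]; constructor <;> linarith
          have h2' := le_abs_self (Real.cos w' - Real.cos w)
          linarith
        · have hw3 : w < π := by rw [hww]; linarith
          rw [s0_eval3 h3 hw3, s0_eval2 h1 h2]
          have h := cos_lip w' (π/2)
          rw [Real.cos_pi_div_two] at h
          have : |w' - π/2| ≤ d := by rw [abs_le]; constructor <;> linarith
          have h2' := le_abs_self (Real.cos w' - 0)
          linarith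
      · rcases lt_or_ge w π with h3 | h3
        · rw [s0_eval3 (by linarith) h3, s0_eval3 h2 hwπ]
          linarith
        · have hw4 : w < 5*π/4 := by rw [hww]; linarith
          rw [s0_eval4 h3 hw4, s0_eval3 h2 hwπ]
          have h : |Real.sin (w - π)| ≤ |w - π| := Real.abs_sin_le_abs
          rw [Real.sin_sub_pi] at h
          have : |w - π| ≤ d := by rw [abs_le]; constructor <;> linarith
          have h2' := le_abs_self (-Real.sin w)
          linarith

lemma s0_os (x y : ℝ) : (x - y) * (s0 x - s0 y) ≤ 8 * (x - y)^2 := by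
  rcases le_total y x with h | h
  · nlinarith [s0_one_sided h, sub_nonneg.2 h]
  · nlinarith [s0_one_sided h, sub_nonneg.2 h]

lemma phi_eq (η : ℝ) (n : ℕ) (hn : 0 < n) (r : ℝ) :
    phiDamp η n r = max 0 (min 1 ((n:ℝ) * (r - η) + 1)) := by
  have hn' : (0:ℝ) < n := by exact_mod_cast hn
  have hinv : (n:ℝ) * (1/n) = 1 := by field_simp
  unfold phiDamp
  split_ifs with h1 h2
  · have ht : (n:ℝ) * (r - η) + 1 ≤ 0 := by nlinarith
    rw [min_eq_right (by linarith), max_eq_left (by linarith)]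
  · push_neg at h1
    have h0 : (0:ℝ) < (n:ℝ)*(r-η)+1 := by nlinarith
    have hlt : (n:ℝ)*(r-η)+1 ≤ 1 := by nlinarith
    rw [min_eq_right hlt, max_eq_right (by linarith)]
  · push_neg at h1 h2
    have : 1 ≤ (n:ℝ)*(r-η)+1 := by nlinarith
    rw [min_eq_left this, max_eq_right (by norm_num)]

lemma phi_mem (η : ℝ) (n : ℕ) (hn : 0 < n) (r : ℝ) :
    0 ≤ phiDamp η n r ∧ phiDamp η n r ≤ 1 := by
  rw [phi_eq η n hn]
  exact ⟨le_max_left _ _, max_le (by norm_num) (min_le_left _ _)⟩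

lemma phi_lip (η : ℝ) (n : ℕ) (hn : 0 < n) (a b : ℝ) :
    |phiDamp η n a - phiDamp η n b| ≤ (n:ℝ) * |a - b| := by
  rw [phi_eq η n hn, phi_eq η n hn, max_comm 0 _, max_comm 0 _]
  calc |max (min 1 ((n:ℝ)*(a-η)+1)) 0 - max (min 1 ((n:ℝ)*(b-η)+1)) 0|
      ≤ |min 1 ((n:ℝ)*(a-η)+1) - min 1 ((n:ℝ)*(b-η)+1)| := abs_max_sub_max_le_abs _ _ _
    _ ≤ max |(1:ℝ) - 1| |((n:ℝ)*(a-η)+1) - ((n:ℝ)*(b-η)+1)| := abs_min_sub_min_le_max _ _ _ _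
    _ = |(n:ℝ) * (a - b)| := by rw [show ((n:ℝ)*(a-η)+1) - ((n:ℝ)*(b-η)+1) = (n:ℝ)*(a-b) by ring]; simp; positivity
    _ = (n:ℝ) * |a - b| := by rw [abs_mul, abs_of_nonneg (by positivity : (0:ℝ) ≤ (n:ℝ))]

lemma phi_mono (η : ℝ) (n : ℕ) (hn : 0 < n) {a b : ℝ} (hab : a ≤ b) :
    phiDamp η n a ≤ phiDamp η n b := by
  rw [phi_eq η n hn, phi_eq η n hn]
  have hn' : (0:ℝ) ≤ n := by positivity
  exact max_le_max le_rfl (min_le_min le_rfl (by nlinarith))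

lemma phi_zero (η : ℝ) (n : ℕ) {r : ℝ} (h : r ≤ η - 1/n) : phiDamp η n r = 0 := by
  rw [phiDamp, if_pos h]

lemma hfun_nonneg (η : ℝ) (n : ℕ) (hn : 0 < n) {r : ℝ} (hr : 0 < r) :
    0 ≤ phiDamp η n r / r :=
  div_nonneg (phi_mem η n hn r).1 hr.le

lemma hfun_le (η : ℝ) (n : ℕ) (hn : 0 < n) (hb : 0 < η - 1/n) {r : ℝ} (hr : 0 < r) :
    phiDamp η n r / r ≤ 1 / (η - 1/n) := by
  rcases le_or_gt r (η - 1/n) with h | h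
  · rw [phi_zero η n h]; simp only [zero_div]; positivity
  · calc phiDamp η n r / r ≤ 1 / r := (div_le_div_iff_of_pos_right hr).2 (phi_mem η n hn r).2
      _ ≤ 1 / (η - 1/n) := one_div_le_one_div_of_le hb h.le

lemma hfun_lip_ord (η : ℝ) (n : ℕ) (hn : 0 < n) (hb : 0 < η - 1/n) {r₁ r₂ : ℝ}
    (h1 : 0 < r₁) (h2 : 0 < r₂) (h12 : r₁ ≤ r₂) :
    |phiDamp η n r₁ / r₁ - phiDamp η n r₂ / r₂|
      ≤ ((n:ℝ) / (η - 1/n) + 1 / (η - 1/n)^2) * (r₂ - r₁) := by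
  set b := η - 1/n with hbdef
  set p₁ := phiDamp η n r₁ with hp1
  set p₂ := phiDamp η n r₂ with hp2
  have hm1 := phi_mem η n hn r₁
  have hm2 := phi_mem η n hn r₂
  have hmono : p₁ ≤ p₂ := phi_mono η n hn h12
  have hK : 0 ≤ ((n:ℝ)/b + 1/b^2) := by positivity
  have hd : 0 ≤ r₂ - r₁ := by linarith
  rw [abs_le]
  constructor
  · -- p₂/r₂ - p₁/r₁ ≤ K (r₂ - r₁)
    rw [neg_le, neg_sub]
    have step1 : p₂/r₂ - p₁/r₁ ≤ (p₂ - p₁)/r₂ := by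
      have : p₁/r₂ ≤ p₁/r₁ := div_le_div_of_nonneg_left hm1.1 h1 h12
      have e : (p₂ - p₁)/r₂ = p₂/r₂ - p₁/r₂ := by ring
      linarith
    rcases le_or_gt r₂ b with hc | hc
    · have z2 : p₂ = 0 := phi_zero η n hc
      have z1 : p₁ = 0 := phi_zero η n (le_trans h12 hc)
      rw [z1, z2]
      simp only [zero_div, sub_zero, sub_self]
      nlinarith [mul_nonneg hK hd]
    · have hlip : p₂ - p₁ ≤ (n:ℝ) * (r₂ - r₁) := by
        have := phi_lip η n hn r₂ r₁
        have ha : |r₂ - r₁| = r₂ - r₁ := abs_of_nonneg hd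
        rw [ha] at this
        calc p₂ - p₁ ≤ |p₂ - p₁| := le_abs_self _
          _ ≤ (n:ℝ) * (r₂ - r₁) := this
      have step2 : (p₂ - p₁)/r₂ ≤ ((n:ℝ) * (r₂ - r₁))/b := by
        apply div_le_div₀ (by positivity) hlip hb hc.le
      have e2 : ((n:ℝ) * (r₂ - r₁))/b = ((n:ℝ)/b) * (r₂ - r₁) := by ring
      nlinarith [mul_nonneg (le_of_lt (show (0:ℝ) < 1/b^2 by positivity)) hd]
  · -- p₁/r₁ - p₂/r₂ ≤ K (r₂ - r₁)
    rcases le_or_gt r₁ b with hc | hc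
    · have z1 : p₁ = 0 := phi_zero η n hc
      rw [z1]
      have hpr : 0 ≤ p₂/r₂ := div_nonneg hm2.1 h2.le
      simp only [zero_div]
      nlinarith [mul_nonneg hK hd]
    · have step1 : p₁/r₁ - p₂/r₂ ≤ p₂ * (r₂ - r₁) / (r₁ * r₂) := by
        have e : p₂ * (r₂ - r₁) / (r₁ * r₂) = p₂/r₁ - p₂/r₂ := by
          field_simp
        rw [e]
        have : p₁/r₁ ≤ p₂/r₁ := (div_le_div_iff_of_pos_right h1).2 hmono
        linarith
      have step2 : p₂ * (r₂ - r₁) / (r₁ * r₂) ≤ (r₂ - r₁) / (b * b) := by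
        apply div_le_div₀ hd ?_ (by positivity) ?_
        · nlinarith [hm2.1, hm2.2]
        · nlinarith [hb, hc, h12, h2]
      have e2 : (r₂ - r₁) / (b * b) = (1/b^2) * (r₂ - r₁) := by ring
      nlinarith [mul_nonneg (show (0:ℝ) ≤ (n:ℝ)/b by positivity) hd]

lemma hfun_lip (η : ℝ) (n : ℕ) (hn : 0 < n) (hb : 0 < η - 1/n) {r₁ r₂ : ℝ}
    (h1 : 0 < r₁) (h2 : 0 < r₂) :
    |phiDamp η n r₁ / r₁ - phiDamp η n r₂ / r₂|
      ≤ ((n:ℝ) / (η - 1/n) + 1 / (η - 1/n)^2) * |r₁ - r₂| := by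
  rcases le_total r₁ r₂ with h | h
  · rw [abs_sub_comm r₁ r₂, abs_of_nonneg (sub_nonneg.2 h)]
    exact hfun_lip_ord η n hn hb h1 h2 h
  · rw [abs_sub_comm, abs_of_nonneg (sub_nonneg.2 h)]
    exact hfun_lip_ord η n hn hb h2 h1 h

lemma c0_negshift (x : ℝ) : c0 x = c0 (x + π) := by
  have h := c0_shift (x + π) (-1)
  rw [show (x + π) + ((-1 : ℤ) : ℝ) * π = x by push_cast; ring] at h
  exact h

lemma s0_negshift (x : ℝ) : s0 x = s0 (x + π) := by
  have h := s0_shift (x + π) (-1)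
  rw [show (x + π) + ((-1 : ℤ) : ℝ) * π = x by push_cast; ring] at h
  exact h


end SailAux

lemma wrapBase_eq_self {x : ℝ} (h1 : -(π/4) ≤ x) (h2 : x < 7*π/4) : wrapBase x = x :=
  (toIcoMod_eq_self _).2 ⟨h1, by linarith⟩

lemma wrapBase_shift {x : ℝ} (h1 : -(3*π/4) ≤ x) (h2 : x < -(π/4)) :
    wrapBase x = x + 2*π := by
  have hπ := Real.pi_gt_three
  have h := toIcoMod_add_right Real.two_pi_pos (-(π/4)) x
  rw [wrapBase, ← h]
  exact (toIcoMod_eq_self _).2 ⟨by linarith, by linarith⟩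

lemma mu_star_eq (v r θ : ℝ) :
    mu1star v θ = -(v * SailAux.c0 θ) ∧ mu2star v r θ = v * SailAux.s0 θ / r := by
  have hπ := Real.pi_gt_three
  set w := wrapStar θ with hwdef
  have hmem : w ∈ Set.Ico (-(3*π/4)) (-(3*π/4) + 2*π) :=
    toIcoMod_mem_Ico Real.two_pi_pos (-(3*π/4)) θ
  obtain ⟨hw1, hw2⟩ := hmem
  have hw2' : w < 5*π/4 := by linarith
  have hkey : θ - w = (toIcoDiv Real.two_pi_pos (-(3*π/4)) θ : ℝ) * (2*π) := by
    have h := self_sub_toIcoMod Real.two_pi_pos (-(3*π/4)) θ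
    rw [zsmul_eq_mul] at h
    exact h
  have hθ : θ = w + ((2 * toIcoDiv Real.two_pi_pos (-(3*π/4)) θ : ℤ) : ℝ) * π := by
    push_cast
    linear_combination hkey
  have hc : SailAux.c0 θ = SailAux.c0 w := by
    conv_lhs => rw [hθ]
    rw [SailAux.c0_shift]
  have hs : SailAux.s0 θ = SailAux.s0 w := by
    conv_lhs => rw [hθ]
    rw [SailAux.s0_shift]
  rw [hc, hs, mu1star, mu2star, ← hwdef]
  rcases lt_or_ge w (-(π/2)) with hr1 | hr1
  · -- Region 1 : w ∈ [-3π/4, -π/2)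
    have hbr : w < π/4 := by linarith
    have hwb : wrapBase w = w + 2*π := wrapBase_shift hw1 (by linarith)
    have hc0 : SailAux.c0 w = -Real.sin w := by
      rw [SailAux.c0_negshift, SailAux.c0_eval2 (by linarith) (by linarith), Real.sin_add_pi]
    have hs0 : SailAux.s0 w = Real.cos w := by
      rw [SailAux.s0_negshift, SailAux.s0_eval2 (by linarith) (by linarith), Real.cos_add_pi]
      ring
    rw [if_pos hbr, if_pos hbr, mu1minus, mu2minus, hwb,
      if_neg (by push_neg; linarith), if_neg (by push_neg; linarith),
      if_pos (by linarith), if_neg (by push_neg; linarith), if_neg (by push_neg; linarith),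
      if_pos (by linarith), Real.sin_add_two_pi, Real.cos_add_two_pi, hc0, hs0]
    constructor <;> ring
  · rcases lt_or_ge w (-(π/4)) with hr2 | hr2
    · -- Region 2 : w ∈ [-π/2, -π/4)
      have hbr : w < π/4 := by linarith
      have hwb : wrapBase w = w + 2*π := wrapBase_shift hw1 hr2
      have hc0 : SailAux.c0 w = 1 := by
        rw [SailAux.c0_negshift, SailAux.c0_eval3 (by linarith) (by linarith)]
      have hs0 : SailAux.s0 w = 0 := by
        rw [SailAux.s0_negshift, SailAux.s0_eval3 (by linarith) (by linarith)]
      rw [if_pos hbr, if_pos hbr, mu1minus, mu2minus, hwb,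
        if_neg (by push_neg; linarith), if_neg (by push_neg; linarith),
        if_neg (by push_neg; linarith), if_neg (by push_neg; linarith),
        if_neg (by push_neg; linarith), if_neg (by push_neg; linarith), hc0, hs0]
      constructor <;> ring
    · rcases lt_or_ge w 0 with hr3 | hr3
      · -- Region 3 : w ∈ [-π/4, 0)
        have hbr : w < π/4 := by linarith
        have hwb : wrapBase w = w := wrapBase_eq_self hr2 (by linarith)
        have hc0 : SailAux.c0 w = 1 := by
          rw [SailAux.c0_negshift, SailAux.c0_eval3 (by linarith) (by linarith)]
        have hs0 : SailAux.s0 w = 0 := by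
          rw [SailAux.s0_negshift, SailAux.s0_eval3 (by linarith) (by linarith)]
        rw [if_pos hbr, if_pos hbr, mu1minus, mu2minus, hwb, if_pos hr3, if_pos hr3,
          hc0, hs0]
        constructor <;> ring
      · rcases lt_or_ge w (π/4) with hr4 | hr4
        · -- Region 4 : w ∈ [0, π/4)
          have hwb : wrapBase w = w := wrapBase_eq_self (by linarith) (by linarith)
          have hc0 : SailAux.c0 w = Real.cos w := SailAux.c0_eval1 hr3 hr4
          have hs0 : SailAux.s0 w = Real.sin w := SailAux.s0_eval1 hr3 hr4
          rw [if_pos hr4, if_pos hr4, mu1minus, mu2minus, hwb,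
            if_neg (by push_neg; linarith), if_pos (by linarith),
            if_neg (by push_neg; linarith), if_pos (by linarith), hc0, hs0]
          constructor <;> ring
        · rcases lt_or_ge w (π/2) with hr5 | hr5
          · -- Region 5 : w ∈ [π/4, π/2)
            have hwb : wrapBase w = w := wrapBase_eq_self (by linarith) (by linarith)
            have hc0 : SailAux.c0 w = Real.sin w := SailAux.c0_eval2 hr4 hr5
            have hs0 : SailAux.s0 w = -Real.cos w := SailAux.s0_eval2 hr4 hr5
            rw [if_neg (by push_neg; exact hr4), if_neg (by push_neg; exact hr4),
              mu1plus, mu2plus, hwb, if_pos hr5, if_pos hr5, hc0, hs0]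
            constructor <;> ring
          · rcases lt_or_ge w π with hr6 | hr6
            · -- Region 6 : w ∈ [π/2, π)
              have hwb : wrapBase w = w := wrapBase_eq_self (by linarith) (by linarith)
              have hc0 : SailAux.c0 w = 1 := SailAux.c0_eval3 hr5 hr6
              have hs0 : SailAux.s0 w = 0 := SailAux.s0_eval3 hr5 hr6
              rw [if_neg (by push_neg; linarith), if_neg (by push_neg; linarith),
                mu1plus, mu2plus, hwb, if_neg (by push_neg; exact hr5), if_pos hr6,
                if_neg (by push_neg; exact hr5), if_pos hr6, hc0, hs0]
              constructor <;> ring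
            · -- Region 7 : w ∈ [π, 5π/4)
              have hwb : wrapBase w = w := wrapBase_eq_self (by linarith) (by linarith)
              have hc0 : SailAux.c0 w = -Real.cos w := SailAux.c0_eval4 hr6 hw2'
              have hs0 : SailAux.s0 w = -Real.sin w := SailAux.s0_eval4 hr6 hw2'
              rw [if_neg (by push_neg; linarith), if_neg (by push_neg; linarith),
                mu1plus, mu2plus, hwb, if_neg (by push_neg; linarith),
                if_neg (by push_neg; exact hr6), if_neg (by push_neg; linarith),
                if_neg (by push_neg; exact hr6), hc0, hs0]
              constructor <;> ring

lemma combine_bound (v b Kh n' r₁ r₂ θ₁ θ₂ p₁ p₂ c₁ c₂ s₁ s₂ h₁ h₂ : ℝ)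
    (hv : 0 < v) (hb : 0 < b) (hKh0 : 0 ≤ Kh) (hn0 : 0 ≤ n')
    (hp10 : 0 ≤ p₁) (hp11 : p₁ ≤ 1) (hc20 : 0 ≤ c₂) (hc21 : c₂ ≤ 1)
    (hs2 : |s₂| ≤ 1)
    (hcd : |c₁ - c₂| ≤ 8 * |θ₁ - θ₂|)
    (hpd : |p₁ - p₂| ≤ n' * |r₁ - r₂|)
    (hh10 : 0 ≤ h₁) (hh11 : h₁ ≤ 1/b)
    (hsos : (θ₁ - θ₂) * (s₁ - s₂) ≤ 8 * (θ₁ - θ₂)^2)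
    (hhd : |h₁ - h₂| ≤ Kh * |r₁ - r₂|) :
    (-(v * p₁)) * ((r₁ - r₂) * (c₁ - c₂)) + (-(v * c₂)) * ((r₁ - r₂) * (p₁ - p₂))
      + (v * h₁) * ((θ₁ - θ₂) * (s₁ - s₂)) + (v * s₂) * ((θ₁ - θ₂) * (h₁ - h₂))
    ≤ v * (8 + n' + 8/b + Kh) * ((r₁ - r₂)^2 + (θ₁ - θ₂)^2) := by
  have habs : ∀ x y X Y : ℝ, |x| ≤ X → |y| ≤ Y → x * y ≤ X * Y := by
    intro x y X Y hx hy
    calc x * y ≤ |x * y| := le_abs_self _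
      _ = |x| * |y| := abs_mul _ _
      _ ≤ X * Y := mul_le_mul hx hy (abs_nonneg _) ((abs_nonneg x).trans hx)
  have T1 : (-(v * p₁)) * ((r₁ - r₂) * (c₁ - c₂))
      ≤ v * (|r₁ - r₂| * (8 * |θ₁ - θ₂|)) := by
    apply habs
    · rw [abs_neg, abs_mul, abs_of_nonneg hv.le, abs_of_nonneg hp10]
      nlinarith
    · rw [abs_mul]
      exact mul_le_mul_of_nonneg_left hcd (abs_nonneg _)
  have T2 : (-(v * c₂)) * ((r₁ - r₂) * (p₁ - p₂))
      ≤ v * (|r₁ - r₂| * (n' * |r₁ - r₂|)) := by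
    apply habs
    · rw [abs_neg, abs_mul, abs_of_nonneg hv.le, abs_of_nonneg hc20]
      nlinarith
    · rw [abs_mul]
      exact mul_le_mul_of_nonneg_left hpd (abs_nonneg _)
  have T3 : (v * h₁) * ((θ₁ - θ₂) * (s₁ - s₂)) ≤ (v * (1/b)) * (8 * (θ₁ - θ₂)^2) := by
    have hx0 : 0 ≤ v * h₁ := mul_nonneg hv.le hh10
    have hxX : v * h₁ ≤ v * (1/b) := mul_le_mul_of_nonneg_left hh11 hv.le
    have hY0 : (0:ℝ) ≤ 8 * (θ₁ - θ₂)^2 := by positivity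
    calc (v * h₁) * ((θ₁ - θ₂) * (s₁ - s₂))
        ≤ (v * h₁) * (8 * (θ₁ - θ₂)^2) := mul_le_mul_of_nonneg_left hsos hx0
      _ ≤ (v * (1/b)) * (8 * (θ₁ - θ₂)^2) := mul_le_mul_of_nonneg_right hxX hY0
  have T4 : (v * s₂) * ((θ₁ - θ₂) * (h₁ - h₂))
      ≤ v * (|θ₁ - θ₂| * (Kh * |r₁ - r₂|)) := by
    apply habs
    · rw [abs_mul, abs_of_nonneg hv.le]
      nlinarith
    · rw [abs_mul]
      exact mul_le_mul_of_nonneg_left hhd (abs_nonneg _)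
  have prodsq : |r₁ - r₂| * |θ₁ - θ₂| ≤ ((r₁ - r₂)^2 + (θ₁ - θ₂)^2) / 2 := by
    nlinarith [sq_nonneg (|r₁ - r₂| - |θ₁ - θ₂|), sq_abs (r₁ - r₂), sq_abs (θ₁ - θ₂)]
  have hS0 : (0:ℝ) ≤ (r₁ - r₂)^2 + (θ₁ - θ₂)^2 := by positivity
  have B1 : v * (|r₁ - r₂| * (8 * |θ₁ - θ₂|))
      ≤ 4 * v * ((r₁ - r₂)^2 + (θ₁ - θ₂)^2) := by
    have e : v * (|r₁ - r₂| * (8 * |θ₁ - θ₂|)) = (8*v) * (|r₁ - r₂| * |θ₁ - θ₂|) := by ring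
    rw [e]
    calc (8*v) * (|r₁ - r₂| * |θ₁ - θ₂|)
        ≤ (8*v) * (((r₁ - r₂)^2 + (θ₁ - θ₂)^2) / 2) :=
          mul_le_mul_of_nonneg_left prodsq (by positivity)
      _ = 4 * v * ((r₁ - r₂)^2 + (θ₁ - θ₂)^2) := by ring
  have B2 : v * (|r₁ - r₂| * (n' * |r₁ - r₂|))
      ≤ v * n' * ((r₁ - r₂)^2 + (θ₁ - θ₂)^2) := by
    have e : v * (|r₁ - r₂| * (n' * |r₁ - r₂|)) = (v * n') * |r₁ - r₂|^2 := by ring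
    rw [e, sq_abs]
    have h := le_add_of_nonneg_right (sq_nonneg (θ₁ - θ₂)) (a := (r₁ - r₂)^2)
    exact mul_le_mul_of_nonneg_left h (by positivity)
  have B3 : (v * (1/b)) * (8 * (θ₁ - θ₂)^2)
      ≤ v * (8/b) * ((r₁ - r₂)^2 + (θ₁ - θ₂)^2) := by
    have e : (v * (1/b)) * (8 * (θ₁ - θ₂)^2) = (v * (8/b)) * (θ₁ - θ₂)^2 := by ring
    rw [e]
    have h := le_add_of_nonneg_left (sq_nonneg (r₁ - r₂)) (a := (θ₁ - θ₂)^2)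
    exact mul_le_mul_of_nonneg_left h (by positivity)
  have B4 : v * (|θ₁ - θ₂| * (Kh * |r₁ - r₂|))
      ≤ v * Kh / 2 * ((r₁ - r₂)^2 + (θ₁ - θ₂)^2) := by
    have e : v * (|θ₁ - θ₂| * (Kh * |r₁ - r₂|)) = (v * Kh) * (|r₁ - r₂| * |θ₁ - θ₂|) := by
      ring
    rw [e]
    calc (v * Kh) * (|r₁ - r₂| * |θ₁ - θ₂|)
        ≤ (v * Kh) * (((r₁ - r₂)^2 + (θ₁ - θ₂)^2) / 2) :=
          mul_le_mul_of_nonneg_left prodsq (mul_nonneg hv.le hKh0)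
      _ = v * Kh / 2 * ((r₁ - r₂)^2 + (θ₁ - θ₂)^2) := by ring
  have f1 : 0 ≤ v * ((r₁ - r₂)^2 + (θ₁ - θ₂)^2) := mul_nonneg hv.le hS0
  have f2 : 0 ≤ v * Kh * ((r₁ - r₂)^2 + (θ₁ - θ₂)^2) :=
    mul_nonneg (mul_nonneg hv.le hKh0) hS0
  have expand : v * (8 + n' + 8/b + Kh) * ((r₁ - r₂)^2 + (θ₁ - θ₂)^2)
      = 4 * v * ((r₁ - r₂)^2 + (θ₁ - θ₂)^2) + v * n' * ((r₁ - r₂)^2 + (θ₁ - θ₂)^2)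
        + v * (8/b) * ((r₁ - r₂)^2 + (θ₁ - θ₂)^2) + v * Kh / 2 * ((r₁ - r₂)^2 + (θ₁ - θ₂)^2)
        + 4 * (v * ((r₁ - r₂)^2 + (θ₁ - θ₂)^2))
        + (v * Kh * ((r₁ - r₂)^2 + (θ₁ - θ₂)^2)) / 2 := by ring
  linarith [le_of_eq expand]

/-- **One-sided (monotonicity-type) estimate for the damped feedback drift.**
There is a constant `C ≥ 0` such that the damped drift vector field
`(φ_n·μ₁*, φ_n·μ₂*)` satisfies the one-sided Lipschitz inequality needed for the
Yamada–Watanabe pathwise-uniqueness argument. -/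
theorem damped_drift_monotonicity
    (v η : ℝ) (hv : 0 < v) (hη : 0 < η) (n : ℕ) (hn : 0 < n) (hnη : 1 / (n : ℝ) < η) :
    ∃ C : ℝ, 0 ≤ C ∧ ∀ r₁ r₂ θ₁ θ₂ : ℝ, 0 < r₁ → 0 < r₂ →
      (r₁ - r₂) * (phiDamp η n r₁ * mu1star v θ₁ - phiDamp η n r₂ * mu1star v θ₂)
        + (θ₁ - θ₂) * (phiDamp η n r₁ * mu2star v r₁ θ₁ - phiDamp η n r₂ * mu2star v r₂ θ₂)
      ≤ C * ((r₁ - r₂) ^ 2 + (θ₁ - θ₂) ^ 2) := by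
  have hn' : (0:ℝ) < n := by exact_mod_cast hn
  have hb : (0:ℝ) < η - 1/(n:ℝ) := by linarith
  have hKh0 : (0:ℝ) ≤ (n:ℝ)/(η - 1/(n:ℝ)) + 1/(η - 1/(n:ℝ))^2 := by
    have h1 : (0:ℝ) ≤ (n:ℝ)/(η - 1/(n:ℝ)) := div_nonneg hn'.le hb.le
    have h2 : (0:ℝ) ≤ 1/(η - 1/(n:ℝ))^2 := by positivity
    linarith
  refine ⟨v * (8 + (n:ℝ) + 8/(η - 1/(n:ℝ)) + ((n:ℝ)/(η - 1/(n:ℝ)) + 1/(η - 1/(n:ℝ))^2)),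
    ?_, ?_⟩
  · apply mul_nonneg hv.le
    have h3 : (0:ℝ) ≤ 8/(η - 1/(n:ℝ)) := div_nonneg (by norm_num) hb.le
    linarith
  intro r₁ r₂ θ₁ θ₂ hr₁ hr₂
  obtain ⟨e11, e21⟩ := mu_star_eq v r₁ θ₁
  obtain ⟨e12, e22⟩ := mu_star_eq v r₂ θ₂
  rw [e11, e12, e21, e22]
  have identity :
      (r₁ - r₂) * (phiDamp η n r₁ * (-(v * SailAux.c0 θ₁))
          - phiDamp η n r₂ * (-(v * SailAux.c0 θ₂)))
        + (θ₁ - θ₂) * (phiDamp η n r₁ * (v * SailAux.s0 θ₁ / r₁)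
          - phiDamp η n r₂ * (v * SailAux.s0 θ₂ / r₂))
      = (-(v * phiDamp η n r₁)) * ((r₁ - r₂) * (SailAux.c0 θ₁ - SailAux.c0 θ₂))
        + (-(v * SailAux.c0 θ₂)) * ((r₁ - r₂) * (phiDamp η n r₁ - phiDamp η n r₂))
        + (v * (phiDamp η n r₁ / r₁)) * ((θ₁ - θ₂) * (SailAux.s0 θ₁ - SailAux.s0 θ₂))
        + (v * SailAux.s0 θ₂)
          * ((θ₁ - θ₂) * (phiDamp η n r₁ / r₁ - phiDamp η n r₂ / r₂)) := by
    ring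
  rw [identity]
  have hp1 := SailAux.phi_mem η n hn r₁
  have hc2 := SailAux.c0_bounds θ₂
  have hs2 := SailAux.s0_bounds θ₂
  exact combine_bound v (η - 1/(n:ℝ)) ((n:ℝ)/(η - 1/(n:ℝ)) + 1/(η - 1/(n:ℝ))^2) (n:ℝ)
    r₁ r₂ θ₁ θ₂ (phiDamp η n r₁) (phiDamp η n r₂)
    (SailAux.c0 θ₁) (SailAux.c0 θ₂) (SailAux.s0 θ₁) (SailAux.s0 θ₂)
    (phiDamp η n r₁ / r₁) (phiDamp η n r₂ / r₂)
    hv hb hKh0 hn'.le hp1.1 hp1.2 hc2.1 hc2.2 (abs_le.2 ⟨hs2.1, hs2.2⟩)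
    (SailAux.c0_diff θ₁ θ₂) (SailAux.phi_lip η n hn r₁ r₂)
    (SailAux.hfun_nonneg η n hn hr₁) (SailAux.hfun_le η n hn hb hr₁)
    (SailAux.s0_os θ₁ θ₂) (SailAux.hfun_lip η n hn hb hr₁ hr₂)
end

section
/- Let v > 0 and let μ₁* be defined as in the context. Then −v ≤ μ₁*(θ) ≤ −v/√2 for every θ ∈ ℝ. Consequently, if η ≥ 0, r > η, Θ : [0,∞) → ℝ is measurable, and R_t = r + ∫₀^t μ₁*(Θ_s) ds for t ≥ 0, then any time T ≥ 0 with R_T = η satisfies T ≤ √2·(r − η)/v. -/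
open Real

lemma measurable_wrap_aux (a : ℝ) : Measurable (toIcoMod Real.two_pi_pos a) := by
  have h : (toIcoMod Real.two_pi_pos a) = fun x => x - (⌊(x - a) / (2*π)⌋ : ℝ) * (2*π) := by
    funext x
    rw [toIcoMod, toIcoDiv_eq_floor]
    simp [zsmul_eq_mul]
  rw [h]
  measurability

lemma measurable_mu1star_aux (v : ℝ) : Measurable (mu1star v) := by
  have hwb : Measurable wrapBase := measurable_wrap_aux _
  have hws : Measurable wrapStar := measurable_wrap_aux _
  have hplus : Measurable (mu1plus v) := by
    unfold mu1plus
    exact Measurable.ite (hwb measurableSet_Iio)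
      (measurable_const.mul hwb.sin)
      (Measurable.ite (hwb measurableSet_Iio) measurable_const (measurable_const.mul hwb.cos))
  have hminus : Measurable (mu1minus v) := by
    unfold mu1minus
    exact Measurable.ite (hwb measurableSet_Iio) measurable_const
      (Measurable.ite (hwb measurableSet_Iio) (measurable_const.mul hwb.cos)
        (Measurable.ite (hwb measurableSet_Iio) (measurable_const.mul hwb.sin) measurable_const))
  unfold mu1star
  exact Measurable.ite (hws measurableSet_Iio) (hminus.comp hws) (hplus.comp hws)

lemma mu1star_mem_aux (v : ℝ) (hv : 0 < v) (θ : ℝ) :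
    mu1star v θ ∈ Set.Icc (-v) (-(v / Real.sqrt 2)) := by
  have hpi := Real.pi_pos
  have hs2 : Real.sqrt 2 * Real.sqrt 2 = 2 := Real.mul_self_sqrt (by norm_num)
  have hs0 : (0:ℝ) < Real.sqrt 2 := Real.sqrt_pos.mpr (by norm_num)
  have hs1 : (1:ℝ) ≤ Real.sqrt 2 := by nlinarith
  have hkey : v / Real.sqrt 2 = v * (Real.sqrt 2 / 2) := by
    rw [div_eq_iff (ne_of_gt hs0)]
    nlinarith
  have hvv : -v ≤ -(v / Real.sqrt 2) := by nlinarith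
  rw [Set.mem_Icc]
  unfold mu1star
  set φ := wrapStar θ with hφdef
  have hmem : φ ∈ Set.Ico (-(3*π/4)) (-(3*π/4) + 2*π) :=
    toIcoMod_mem_Ico Real.two_pi_pos (-(3*π/4)) θ
  have hlo : -(3*π/4) ≤ φ := hmem.1
  have hhi : φ < 5*π/4 := by have := hmem.2; linarith
  by_cases h : φ < π / 4
  · rw [if_pos h]
    unfold mu1minus
    by_cases h2 : φ < -(π/4)
    · have hB : wrapBase φ = φ + 2*π := by
        have hper := toIcoMod_add_right Real.two_pi_pos (-(π/4)) φ
        rw [wrapBase, ← hper, toIcoMod_eq_self]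
        constructor <;> linarith
      rw [hB, if_neg (by push_neg; linarith), if_neg (by push_neg; linarith)]
      by_cases h3 : φ + 2*π < 3*π/2
      · rw [if_pos h3]
        have hsin : Real.sin (φ + 2*π) = -Real.sin (φ + π) := by
          rw [show φ + 2*π = (φ + π) + π by ring, Real.sin_add_pi]
        have hge : Real.sqrt 2 / 2 ≤ Real.sin (φ + π) := by
          rw [← Real.sin_pi_div_four]
          exact Real.sin_le_sin_of_le_of_le_pi_div_two (by linarith) (by linarith) (by linarith)
        have hle1 : Real.sin (φ + π) ≤ 1 := Real.sin_le_one _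
        rw [hsin]
        constructor <;> nlinarith
      · rw [if_neg h3]
        exact ⟨le_refl _, hvv⟩
    · have hB : wrapBase φ = φ := by
        rw [wrapBase, toIcoMod_eq_self]
        constructor <;> linarith
      rw [hB]
      by_cases h3 : φ < 0
      · rw [if_pos h3]
        exact ⟨le_refl _, hvv⟩
      · rw [if_neg h3, if_pos (by linarith)]
        have hge : Real.sqrt 2 / 2 ≤ Real.cos φ := by
          rw [← Real.cos_pi_div_four]
          exact Real.cos_le_cos_of_nonneg_of_le_pi (by linarith) (by linarith) (by linarith)
        have hle1 : Real.cos φ ≤ 1 := Real.cos_le_one _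
        constructor <;> nlinarith
  · rw [if_neg h]
    push_neg at h
    unfold mu1plus
    have hB : wrapBase φ = φ := by
      rw [wrapBase, toIcoMod_eq_self]
      constructor <;> linarith
    rw [hB]
    by_cases h2 : φ < π/2
    · rw [if_pos h2]
      have hge : Real.sqrt 2 / 2 ≤ Real.sin φ := by
        rw [← Real.sin_pi_div_four]
        exact Real.sin_le_sin_of_le_of_le_pi_div_two (by linarith) (by linarith) h
      have hle1 : Real.sin φ ≤ 1 := Real.sin_le_one _
      constructor <;> nlinarith
    · rw [if_neg h2]
      by_cases h3 : φ < π
      · rw [if_pos h3]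
        exact ⟨le_refl _, hvv⟩
      · rw [if_neg h3]
        push_neg at h3
        have hcos : Real.cos φ = -Real.cos (φ - π) := by
          have := Real.cos_sub_pi φ
          linarith
        have hge : Real.sqrt 2 / 2 ≤ Real.cos (φ - π) := by
          rw [← Real.cos_pi_div_four]
          exact Real.cos_le_cos_of_nonneg_of_le_pi (by linarith) (by linarith) (by linarith)
        have hle1 : Real.cos (φ - π) ≤ 1 := Real.cos_le_one _
        rw [hcos]
        constructor <;> nlinarith

/-- **Radial drift bound and travel-time bound for the candidate optimal strategy.**
The feedback radial drift satisfies `−v ≤ μ₁*(θ) ≤ −v/√2` for every `θ`, and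
consequently a boat whose distance to the origin evolves with radial speed
`μ₁*(Θ_t)` reaches the circle of radius `η` from distance `r > η` within time
`√2·(r − η)/v`. -/
theorem mu1star_bounds_and_travel_time
    (v : ℝ) (hv : 0 < v) :
    (∀ θ : ℝ, mu1star v θ ∈ Set.Icc (-v) (-(v / Real.sqrt 2))) ∧
    ∀ (η r : ℝ) (Θ R : ℝ → ℝ) (T : ℝ),
      0 ≤ η → η < r → Measurable Θ →
      (∀ t : ℝ, 0 ≤ t → R t = r + ∫ s in (0:ℝ)..t, mu1star v (Θ s)) →
      0 ≤ T → R T = η → T ≤ Real.sqrt 2 * (r - η) / v := by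
  refine ⟨fun θ => mu1star_mem_aux v hv θ, ?_⟩
  intro η r Θ R T hη hηr hΘ hR hT hRT
  have hs2 : Real.sqrt 2 * Real.sqrt 2 = 2 := Real.mul_self_sqrt (by norm_num)
  have hs0 : (0:ℝ) < Real.sqrt 2 := Real.sqrt_pos.mpr (by norm_num)
  have hmeas : Measurable fun s => mu1star v (Θ s) := (measurable_mu1star_aux v).comp hΘ
  have hint : IntervalIntegrable (fun s => mu1star v (Θ s)) MeasureTheory.volume 0 T := by
    apply IntervalIntegrable.mono_fun' (g := fun _ => v) intervalIntegrable_const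
      hmeas.aestronglyMeasurable
    apply Filter.Eventually.of_forall
    intro s
    have h1 := (mu1star_mem_aux v hv (Θ s)).1
    have h2 := (mu1star_mem_aux v hv (Θ s)).2
    have hnn : 0 ≤ v / Real.sqrt 2 := by positivity
    simp only [Real.norm_eq_abs, abs_le]
    constructor <;> linarith
  have hmono := intervalIntegral.integral_mono_on hT hint intervalIntegrable_const
    (fun x _ => (mu1star_mem_aux v hv (Θ x)).2)
  rw [intervalIntegral.integral_const] at hmono
  have hRTeq := hR T hT
  rw [hRT] at hRTeq
  have hTc : η ≤ r + T * (-(v / Real.sqrt 2)) := by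
    rw [hRTeq]
    have : (T - 0) • (-(v / Real.sqrt 2)) = T * (-(v / Real.sqrt 2)) := by
      rw [smul_eq_mul]; ring
    linarith [hmono, this ▸ hmono]
  have hTw : T * (v / Real.sqrt 2) ≤ r - η := by linarith
  have hw : v / Real.sqrt 2 * Real.sqrt 2 = v := div_mul_cancel₀ v (ne_of_gt hs0)
  rw [le_div_iff₀ hv]
  calc T * v = T * (v / Real.sqrt 2) * Real.sqrt 2 := by rw [mul_assoc, hw]
    _ ≤ (r - η) * Real.sqrt 2 := by
        apply mul_le_mul_of_nonneg_right hTw hs0.le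
    _ = Real.sqrt 2 * (r - η) := by ring
end

section
/- Let v > 0 and let μ₁* and μ₂* be defined as in the context. Then for every θ ∈ ℝ and every r > 0: μ₁*(θ + π) = μ₁*(θ) and μ₂*(r, θ + π) = μ₂*(r, θ); that is, μ₁* and μ₂*(r, ·) are π-periodic. -/
open Real

private lemma key_mu (v r x : ℝ) (hx1 : -(3 * π / 4) ≤ x) (hx2 : x < π / 4) :
    mu1minus v x = mu1plus v (x + π) ∧ mu2minus v r x = mu2plus v r (x + π) := by
  have hπ := Real.pi_pos
  have hb : wrapBase (x + π) = x + π :=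
    (toIcoMod_eq_self _).2 ⟨by linarith, by linarith⟩
  by_cases h : x < -(π / 4)
  · have hb2 : wrapBase x = x + 2 * π :=
      (toIcoMod_eq_iff _).2 ⟨⟨by linarith, by linarith⟩, ⟨-1, by rw [neg_one_zsmul]; ring⟩⟩
    constructor <;>
    · simp only [mu1minus, mu2minus, mu1plus, mu2plus, hb, hb2]
      split_ifs <;>
        first
          | rfl
          | (exfalso; linarith)
          | (simp only [Real.sin_add_two_pi, Real.sin_add_pi, Real.cos_add_two_pi,
              Real.cos_add_pi]; ring)
  · push_neg at h
    have hb2 : wrapBase x = x :=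
      (toIcoMod_eq_self _).2 ⟨by linarith, by linarith⟩
    constructor <;>
    · simp only [mu1minus, mu2minus, mu1plus, mu2plus, hb, hb2]
      split_ifs <;>
        first
          | rfl
          | (exfalso; linarith)
          | (simp only [Real.sin_add_pi, Real.cos_add_pi]; ring)

/-- **`π`-periodicity of the feedback drifts.**
The feedback drifts of the candidate optimal strategy satisfy
`μ₁*(θ + π) = μ₁*(θ)` and `μ₂*(r, θ + π) = μ₂*(r, θ)` for all `θ ∈ ℝ` and `r > 0`. -/
theorem mustar_pi_periodic (v : ℝ) (hv : 0 < v) :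
    ∀ θ r : ℝ, 0 < r →
      mu1star v (θ + π) = mu1star v θ ∧ mu2star v r (θ + π) = mu2star v r θ := by
  intro θ r hr
  have hπ := Real.pi_pos
  obtain ⟨hmem, z, hz⟩ := (toIcoMod_eq_iff Real.two_pi_pos).1
    (show toIcoMod Real.two_pi_pos (-(3 * π / 4)) θ = wrapStar θ from rfl)
  obtain ⟨hm1, hm2⟩ := hmem
  by_cases hc : wrapStar θ < π / 4
  · have hw : wrapStar (θ + π) = wrapStar θ + π :=
      (toIcoMod_eq_iff _).2 ⟨⟨by linarith, by linarith⟩, ⟨z, by nth_rewrite 1 [hz]; ring⟩⟩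
    have hkey := key_mu v r (wrapStar θ) hm1 hc
    constructor
    · simp only [mu1star, hw]
      rw [if_neg (by linarith : ¬ wrapStar θ + π < π / 4), if_pos hc]
      exact hkey.1.symm
    · simp only [mu2star, hw]
      rw [if_neg (by linarith : ¬ wrapStar θ + π < π / 4), if_pos hc]
      exact hkey.2.symm
  · push_neg at hc
    have hw : wrapStar (θ + π) = wrapStar θ - π :=
      (toIcoMod_eq_iff _).2 ⟨⟨by linarith, by linarith⟩,
        ⟨z + 1, by nth_rewrite 1 [hz]; rw [add_zsmul, one_zsmul]; ring⟩⟩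
    have h1 : -(3 * π / 4) ≤ wrapStar θ - π := by linarith
    have h2 : wrapStar θ - π < π / 4 := by linarith
    have hkey := key_mu v r (wrapStar θ - π) h1 h2
    have e : wrapStar θ - π + π = wrapStar θ := by ring
    rw [e] at hkey
    constructor
    · simp only [mu1star, hw]
      rw [if_pos h2, if_neg (by linarith : ¬ wrapStar θ < π / 4)]
      exact hkey.1
    · simp only [mu2star, hw]
      rw [if_pos h2, if_neg (by linarith : ¬ wrapStar θ < π / 4)]
      exact hkey.2
end

section
/- Let α ∈ (0, π/8], v > 0 and R_ζ > 0, set d₁ = sin(α/2) tan α + 1 and c₁² = 1 + (d₁ − cos(3α/2))² − cos²(3α/2). Let β : [0,∞) → ℝ be a continuous function with |β_t| < α/2 for all t ≥ 0, and define Y_t = sin(β_t)·R_ζ sin α + cos(β_t)·R_ζ cos α − v ∫₀^t cos(β_t − β_s) ds for t ≥ 0. If T ≥ 0 satisfies Y_T = 0, then R_ζ² − 2v ∫₀^T Y_s ds ≤ c₁²·R_ζ². -/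
open Real

/-- **Contraction of the distance to the target during the first leg.**
A boat on starboard tack beating upwind from `(Rζ sin α, Rζ cos α)` in a wind `β`
that never deviates by more than `α/2` has squared distance
`R_t² = Rζ² − 2v ∫₀^t Y_s ds`; at the time `T` where it crosses the horizontal axis
(`Y_T = 0`), this squared distance is at most `c₁²·Rζ²`, where
`c₁² = 1 + (d₁ − cos(3α/2))² − cos²(3α/2)` and `d₁ = sin(α/2) tan α + 1`. -/
theorem first_leg_contraction
    (α v Rζ : ℝ) (hα : α ∈ Set.Ioc 0 (π / 8)) (hv : 0 < v) (hRζ : 0 < Rζ)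
    (d₁ c₁sq : ℝ) (hd₁ : d₁ = Real.sin (α / 2) * Real.tan α + 1)
    (hc₁ : c₁sq = 1 + (d₁ - Real.cos (3 * α / 2)) ^ 2 - Real.cos (3 * α / 2) ^ 2)
    (β : ℝ → ℝ) (hβcont : Continuous β) (hβ : ∀ t : ℝ, 0 ≤ t → |β t| < α / 2)
    (Y : ℝ → ℝ)
    (hY : ∀ t : ℝ, Y t =
      Real.sin (β t) * (Rζ * Real.sin α) + Real.cos (β t) * (Rζ * Real.cos α)
        - v * ∫ s in (0:ℝ)..t, Real.cos (β t - β s))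
    (T : ℝ) (hT : 0 ≤ T) (hYT : Y T = 0) :
    Rζ ^ 2 - 2 * v * ∫ s in (0:ℝ)..T, Y s ≤ c₁sq * Rζ ^ 2 := by
  obtain ⟨hα0, hα8⟩ := hα
  have hπ : (0:ℝ) < π := Real.pi_pos
  have hα2 : α < π / 2 := by linarith
  have h3α : 3 * α / 2 ≤ π := by linarith
  have hcosα : 0 < Real.cos α := Real.cos_pos_of_mem_Ioo ⟨by linarith, hα2⟩
  have hsinα : 0 ≤ Real.sin α := Real.sin_nonneg_of_nonneg_of_le_pi (by linarith) (by linarith)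
  have hsinα2 : 0 ≤ Real.sin (α / 2) :=
    Real.sin_nonneg_of_nonneg_of_le_pi (by linarith) (by linarith)
  set c : ℝ := Real.cos (3 * α / 2) with hc
  have hc1 : c ≤ 1 := Real.cos_le_one _
  have htc : Real.tan α * Real.cos α = Real.sin α := Real.tan_mul_cos hcosα.ne'
  -- key inequality : cos (α/2) ≤ d₁ * cos α
  have hkey : Real.cos (α / 2) ≤ d₁ * Real.cos α := by
    have h1 : Real.cos (α - α / 2) = Real.cos α * Real.cos (α / 2)
        + Real.sin α * Real.sin (α / 2) := Real.cos_sub α (α / 2)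
    have h2 : α - α / 2 = α / 2 := by ring
    rw [h2] at h1
    have h3 : Real.cos α * Real.cos (α / 2) ≤ Real.cos α := by
      nlinarith [Real.cos_le_one (α / 2)]
    have h4 : d₁ * Real.cos α = Real.sin (α / 2) * Real.sin α + Real.cos α := by
      rw [hd₁]; nlinarith [htc]
    nlinarith [h1]
  have hd1 : 1 ≤ d₁ := by
    have ht1 : 0 ≤ Real.tan α := by
      rw [Real.tan_eq_sin_div_cos]; exact div_nonneg hsinα hcosα.le
    nlinarith [hd₁]
  -- cos(α - β s) ≥ c  for s ≥ 0
  have hcoslow : ∀ s : ℝ, 0 ≤ s → c ≤ Real.cos (α - β s) := by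
    intro s hs
    obtain ⟨hb1, hb2⟩ := abs_lt.1 (hβ s hs)
    have habs : |α - β s| ≤ 3 * α / 2 := abs_le.2 ⟨by linarith, by linarith⟩
    rw [← Real.cos_abs (α - β s)]
    exact Real.cos_le_cos_of_nonneg_of_le_pi (abs_nonneg _) h3α habs
  -- cos(β t - β s) ≥ cos α
  have hcosdiff : ∀ t s : ℝ, 0 ≤ t → 0 ≤ s → Real.cos α ≤ Real.cos (β t - β s) := by
    intro t s ht' hs'
    obtain ⟨h1, h2⟩ := abs_lt.1 (hβ t ht')
    obtain ⟨h3, h4⟩ := abs_lt.1 (hβ s hs')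
    have habs : |β t - β s| ≤ α := abs_le.2 ⟨by linarith, by linarith⟩
    rw [← Real.cos_abs (β t - β s)]
    exact Real.cos_le_cos_of_nonneg_of_le_pi (abs_nonneg _) (by linarith) habs
  -- rewrite Y via cos (α - β t)
  have hY' : ∀ t : ℝ, Y t = Rζ * Real.cos (α - β t)
      - v * ∫ s in (0:ℝ)..t, Real.cos (β t - β s) := by
    intro t
    rw [hY t, Real.cos_sub]
    ring
  -- integrability of s ↦ cos (β t - β s)
  have hint : ∀ t a b : ℝ, IntervalIntegrable (fun s => Real.cos (β t - β s))
      MeasureTheory.volume a b := by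
    intro t a b
    exact (Real.continuous_cos.comp (continuous_const.sub hβcont)).intervalIntegrable a b
  -- the integral of cos(β t - β s) over [0,t] is at most t
  have hIle : ∀ t : ℝ, 0 ≤ t → (∫ s in (0:ℝ)..t, Real.cos (β t - β s)) ≤ t := by
    intro t ht'
    calc (∫ s in (0:ℝ)..t, Real.cos (β t - β s)) ≤ ∫ s in (0:ℝ)..t, (1:ℝ) := by
          apply intervalIntegral.integral_mono_on ht' (hint t 0 t)
            (intervalIntegrable_const)
          intro s _; exact Real.cos_le_one _
      _ = t := by simp
  -- lower bound on the integral at time T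
  have hIge : T * Real.cos α ≤ ∫ s in (0:ℝ)..T, Real.cos (β T - β s) := by
    calc T * Real.cos α = ∫ s in (0:ℝ)..T, Real.cos α := by simp [mul_comm]
      _ ≤ _ := by
          apply intervalIntegral.integral_mono_on hT intervalIntegrable_const (hint T 0 T)
          intro s hs; exact hcosdiff T s hT hs.1
  -- from Y T = 0 : v T ≤ d₁ Rζ  and  c Rζ ≤ v T
  have hYTeq : Rζ * Real.cos (α - β T) = v * ∫ s in (0:ℝ)..T, Real.cos (β T - β s) := by
    have := hY' T; rw [hYT] at this; linarith
  have hcosup : Real.cos (α - β T) ≤ Real.cos (α / 2) := by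
    obtain ⟨hb1, hb2⟩ := abs_lt.1 (hβ T hT)
    have habs : |α - β T| = α - β T := abs_of_pos (by linarith)
    rw [← Real.cos_abs (α - β T)]
    apply Real.cos_le_cos_of_nonneg_of_le_pi (by positivity) (by rw [habs]; linarith)
    rw [habs]; linarith
  have hvT_le : v * T ≤ d₁ * Rζ := by
    have h1 : v * (T * Real.cos α) ≤ v * ∫ s in (0:ℝ)..T, Real.cos (β T - β s) :=
      mul_le_mul_of_nonneg_left hIge hv.le
    have h2 : Rζ * Real.cos (α - β T) ≤ Rζ * (d₁ * Real.cos α) :=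
      mul_le_mul_of_nonneg_left (le_trans hcosup hkey) hRζ.le
    have h3 : v * T * Real.cos α ≤ d₁ * Rζ * Real.cos α := by linarith
    exact le_of_mul_le_mul_right h3 hcosα
  have hvT_ge : c * Rζ ≤ v * T := by
    have h1 : v * ∫ s in (0:ℝ)..T, Real.cos (β T - β s) ≤ v * T :=
      mul_le_mul_of_nonneg_left (hIle T hT) hv.le
    have h2 : Rζ * c ≤ Rζ * Real.cos (α - β T) :=
      mul_le_mul_of_nonneg_left (hcoslow T hT) hRζ.le
    linarith
  -- Y is continuous
  have hCβ : Continuous (fun s => Real.cos (β s)) := Real.continuous_cos.comp hβcont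
  have hSβ : Continuous (fun s => Real.sin (β s)) := Real.continuous_sin.comp hβcont
  have hsplit : ∀ t : ℝ, (∫ s in (0:ℝ)..t, Real.cos (β t - β s)) =
      Real.cos (β t) * (∫ s in (0:ℝ)..t, Real.cos (β s))
        + Real.sin (β t) * (∫ s in (0:ℝ)..t, Real.sin (β s)) := by
    intro t
    rw [← intervalIntegral.integral_const_mul, ← intervalIntegral.integral_const_mul,
      ← intervalIntegral.integral_add (f := fun s => Real.cos (β t) * Real.cos (β s))
        (g := fun s => Real.sin (β t) * Real.sin (β s))
        ((continuous_const.mul hCβ).intervalIntegrable 0 t)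
        ((continuous_const.mul hSβ).intervalIntegrable 0 t)]
    apply intervalIntegral.integral_congr
    intro s _
    exact Real.cos_sub (β t) (β s)
  have hYcont : Continuous Y := by
    have h1 : Continuous fun t => ∫ s in (0:ℝ)..t, Real.cos (β s) :=
      intervalIntegral.continuous_primitive (fun a b => hCβ.intervalIntegrable a b) 0
    have h2 : Continuous fun t => ∫ s in (0:ℝ)..t, Real.sin (β s) :=
      intervalIntegral.continuous_primitive (fun a b => hSβ.intervalIntegrable a b) 0
    have heq : Y = fun t => Real.sin (β t) * (Rζ * Real.sin α)
        + Real.cos (β t) * (Rζ * Real.cos α)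
        - v * (Real.cos (β t) * (∫ s in (0:ℝ)..t, Real.cos (β s))
            + Real.sin (β t) * (∫ s in (0:ℝ)..t, Real.sin (β s))) := by
      funext t; rw [hY t, hsplit t]
    rw [heq]
    exact ((hSβ.mul continuous_const).add (hCβ.mul continuous_const)).sub
      (continuous_const.mul ((hCβ.mul h1).add (hSβ.mul h2)))
  -- pointwise lower bound : Y s ≥ c Rζ - v s for s ∈ [0,T]
  have hYlow : ∀ s ∈ Set.Icc (0:ℝ) T, c * Rζ - v * s ≤ Y s := by
    intro s hs
    rw [hY' s]
    have h1 : Rζ * c ≤ Rζ * Real.cos (α - β s) :=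
      mul_le_mul_of_nonneg_left (hcoslow s hs.1) hRζ.le
    have h2 : v * ∫ u in (0:ℝ)..s, Real.cos (β s - β u) ≤ v * s :=
      mul_le_mul_of_nonneg_left (hIle s hs.1) hv.le
    linarith
  -- lower bound on ∫ Y
  have hintY : c * Rζ * T - v * T ^ 2 / 2 ≤ ∫ s in (0:ℝ)..T, Y s := by
    have h1 : (∫ s in (0:ℝ)..T, (c * Rζ - v * s)) ≤ ∫ s in (0:ℝ)..T, Y s := by
      apply intervalIntegral.integral_mono_on hT
        ((continuous_const.sub (continuous_const.mul continuous_id')).intervalIntegrable 0 T)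
        (hYcont.intervalIntegrable 0 T)
      exact hYlow
    have h2 : (∫ s in (0:ℝ)..T, (c * Rζ - v * s)) = c * Rζ * T - v * T ^ 2 / 2 := by
      have e1 : (∫ s in (0:ℝ)..T, (c * Rζ - v * s)) =
          (∫ s in (0:ℝ)..T, (c * Rζ : ℝ)) - ∫ s in (0:ℝ)..T, v * s :=
        intervalIntegral.integral_sub intervalIntegrable_const
          ((continuous_const.mul continuous_id').intervalIntegrable 0 T)
      rw [e1, intervalIntegral.integral_const, intervalIntegral.integral_const_mul]
      simp
      ring
    exact h2 ▸ h1
  -- finish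
  have hx0 : 0 ≤ v * T - c * Rζ := by linarith
  have hx1 : v * T - c * Rζ ≤ (d₁ - c) * Rζ := by
    have e0 : (d₁ - c) * Rζ = d₁ * Rζ - c * Rζ := by ring
    rw [e0]; linarith
  have hA : (v * T - c * Rζ) * (v * T - c * Rζ) ≤ ((d₁ - c) * Rζ) * ((d₁ - c) * Rζ) :=
    mul_self_le_mul_self hx0 hx1
  have hB : 2 * v * (c * Rζ * T - v * T ^ 2 / 2) ≤ 2 * v * ∫ s in (0:ℝ)..T, Y s :=
    mul_le_mul_of_nonneg_left hintY (by positivity)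
  have hC : (c ^ 2 - (d₁ - c) ^ 2) * Rζ ^ 2 ≤ 2 * v * (c * Rζ * T - v * T ^ 2 / 2) := by
    have e2 : 2 * v * (c * Rζ * T - v * T ^ 2 / 2) - (c ^ 2 - (d₁ - c) ^ 2) * Rζ ^ 2
        = ((d₁ - c) * Rζ) * ((d₁ - c) * Rζ) - (v * T - c * Rζ) * (v * T - c * Rζ) := by
      ring
    linarith [hA, e2]
  have hD : (1 + (d₁ - c) ^ 2 - c ^ 2) * Rζ ^ 2
      = Rζ ^ 2 - (c ^ 2 - (d₁ - c) ^ 2) * Rζ ^ 2 := by ring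
  rw [hc₁, hD]
  linarith [hB, hC]
end

section
/- Let α ∈ (0, π/8], v > 0 and R₀ > 0, set d₂ = (sin(α/2) + tan α)·cos α / cos(2α) and c₂² = 1 + (d₂ + sin(α/2))² − sin²(α/2). Let β : [0,∞) → ℝ be a continuous function with |β_t| < α/2 for all t ≥ 0, and define X_t = cos(β_t)·R₀ + v ∫₀^t sin(β_t − β_s) ds and Y_t = sin(β_t)·R₀ − v ∫₀^t cos(β_t − β_s) ds for t ≥ 0. If T ≥ 0 is such that X_t tan α + Y_t > 0 for all t ∈ [0, T), then R₀² − 2v ∫₀^T Y_s ds ≤ c₂²·R₀². -/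
open Real MeasureTheory intervalIntegral

private lemma polyident (s c : ℝ) (hpyth : s^2 + c^2 = 1) :
    c^4*(1-8*s^2*c^2)^2 + c^2*((s*(1-2*s^2)+2*s*c) + s*(1-8*s^2*c^2))^2
      - ((c*(1-8*s^2*c^2) + s*(c*(3*s-4*s^3)))^2 + c^2*(c*(3*s-4*s^3))^2)
    = 4*s^4*c^4 + 8*s^2*c^4*(c-c^2)*(1-4*s^2) := by
  linear_combination (c^2 + 3*s^2*c^2 - 8*s^2*c^3 - 8*s^2*c^4 + 12*s^4*c^2
    - 32*s^4*c^4 + 64*s^4*c^6 - 16*s^6*c^2) * hpyth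

private lemma key_ineq (s c : ℝ) (hs : 0 < s) (hc : 0 < c) (hc1 : c ≤ 1)
    (hpyth : s^2 + c^2 = 1) (hs2 : s^2 ≤ 1/25) :
    (1 + (s/c) * (c*(3*s-4*s^3)/(1-8*s^2*c^2)))^2 + (c*(3*s-4*s^3)/(1-8*s^2*c^2))^2
      ≤ c^2 + ((s*(1-2*s^2)+2*s*c)/(1-8*s^2*c^2) + s)^2 := by
  have hc2 : c^2 ≤ 1 := by nlinarith
  have hD : (0:ℝ) < 1-8*s^2*c^2 := by nlinarith
  have t1 : (0:ℝ) ≤ 4*s^4*c^4 := by positivity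
  have t2 : (0:ℝ) ≤ 8*s^2*c^4*(c-c^2)*(1-4*s^2) := by
    apply mul_nonneg (mul_nonneg (by positivity) (by nlinarith)) (by nlinarith)
  have hpoly : ((c*(1-8*s^2*c^2) + s*(c*(3*s-4*s^3)))^2 + c^2*(c*(3*s-4*s^3))^2)
      ≤ c^4*(1-8*s^2*c^2)^2 + c^2*((s*(1-2*s^2)+2*s*c) + s*(1-8*s^2*c^2))^2 := by
    nlinarith [polyident s c hpyth]
  have e1 : (1 + (s/c) * (c*(3*s-4*s^3)/(1-8*s^2*c^2)))^2 + (c*(3*s-4*s^3)/(1-8*s^2*c^2))^2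
      = ((c*(1-8*s^2*c^2) + s*(c*(3*s-4*s^3)))^2 + c^2*(c*(3*s-4*s^3))^2) / (c^2*(1-8*s^2*c^2)^2) := by
    have hDne := hD.ne'
    generalize 1-8*s^2*c^2 = D at hDne ⊢
    field_simp
  have e2 : c^2 + ((s*(1-2*s^2)+2*s*c)/(1-8*s^2*c^2) + s)^2
      = (c^4*(1-8*s^2*c^2)^2 + c^2*((s*(1-2*s^2)+2*s*c) + s*(1-8*s^2*c^2))^2) / (c^2*(1-8*s^2*c^2)^2) := by
    have hDne := hD.ne'
    generalize 1-8*s^2*c^2 = D at hDne ⊢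
    field_simp
  rw [e1, e2]
  exact div_le_div_of_nonneg_right hpoly (by positivity)

private lemma dist_bound (s c R₀ P Q m : ℝ) (hR : 0 < R₀) (hs : 0 < s) (hc : 0 < c)
    (hc1 : c ≤ 1) (hpyth : s^2+c^2=1) (hs2 : s^2 ≤ 1/25)
    (hm : 0 ≤ m) (hP : |P| ≤ R₀ + m) (hmQ : c*m ≤ s*Q) (hQ0 : 0 ≤ Q)
    (hQ : Q*(1-8*s^2*c^2) ≤ c*(3*s-4*s^3)*R₀) :
    P^2 + Q^2 ≤ (c^2 + ((s*(1-2*s^2)+2*s*c)/(1-8*s^2*c^2) + s)^2) * R₀^2 := by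
  have hc2 : c^2 ≤ 1 := by nlinarith
  have hD : (0:ℝ) < 1-8*s^2*c^2 := by nlinarith
  set q := c*(3*s-4*s^3)/(1-8*s^2*c^2) with hqdef
  have hq0 : 0 ≤ q := by
    apply div_nonneg _ (le_of_lt hD)
    nlinarith
  have hQq : Q ≤ q * R₀ := by
    rw [hqdef, div_mul_eq_mul_div, le_div_iff₀ hD]
    linarith
  have hmq : m ≤ s/c * Q := by
    rw [div_mul_eq_mul_div, le_div_iff₀ hc]
    linarith [hmQ]
  have hsc : 0 ≤ s/c := by positivity
  have hP2 : P^2 ≤ (R₀ + s/c * Q)^2 := by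
    have h1 : |P| ≤ R₀ + s/c * Q := le_trans hP (by linarith)
    calc P^2 = |P|^2 := (sq_abs P).symm
    _ ≤ (R₀ + s/c * Q)^2 := by
        apply pow_le_pow_left₀ (abs_nonneg P) h1
  have step : (R₀ + s/c * Q)^2 + Q^2 ≤ (R₀ + s/c * (q*R₀))^2 + (q*R₀)^2 := by
    have h2 : s/c * Q ≤ s/c * (q*R₀) := mul_le_mul_of_nonneg_left hQq hsc
    nlinarith [mul_nonneg hsc hQ0]
  have key := key_ineq s c hs hc hc1 hpyth hs2
  have final : (R₀ + s/c * (q*R₀))^2 + (q*R₀)^2 = ((1 + s/c * q)^2 + q^2) * R₀^2 := by ring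
  have last : ((1 + s/c * q)^2 + q^2) * R₀^2
      ≤ (c^2 + ((s*(1-2*s^2)+2*s*c)/(1-8*s^2*c^2) + s)^2) * R₀^2 := by
    apply mul_le_mul_of_nonneg_right _ (sq_nonneg R₀)
    exact key
  linarith

set_option maxHeartbeats 2000000 in
/-- **Contraction of the distance to the target during the second leg.**
A boat on starboard tack starting from `(R₀, 0)` in a wind `β` that never deviates
by more than `α/2` has squared distance `R_t² = R₀² − 2v ∫₀^t Y_s ds`; as long as it
stays above the tacking line (`X_t tan α + Y_t > 0` on `[0, T)`), its squared
distance at time `T` is at most `c₂²·R₀²`, where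
`c₂² = 1 + (d₂ + sin(α/2))² − sin²(α/2)` and
`d₂ = (sin(α/2) + tan α) cos α / cos(2α)`. -/
theorem second_leg_contraction
    (α v R₀ : ℝ) (hα : α ∈ Set.Ioc 0 (π / 8)) (hv : 0 < v) (hR₀ : 0 < R₀)
    (d₂ c₂sq : ℝ)
    (hd₂ : d₂ = (Real.sin (α / 2) + Real.tan α) * Real.cos α / Real.cos (2 * α))
    (hc₂ : c₂sq = 1 + (d₂ + Real.sin (α / 2)) ^ 2 - Real.sin (α / 2) ^ 2)
    (β : ℝ → ℝ) (hβcont : Continuous β) (hβ : ∀ t : ℝ, 0 ≤ t → |β t| < α / 2)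
    (X Y : ℝ → ℝ)
    (hX : ∀ t : ℝ, X t = Real.cos (β t) * R₀ + v * ∫ s in (0:ℝ)..t, Real.sin (β t - β s))
    (hY : ∀ t : ℝ, Y t = Real.sin (β t) * R₀ - v * ∫ s in (0:ℝ)..t, Real.cos (β t - β s))
    (T : ℝ) (hT : 0 ≤ T)
    (hstay : ∀ t : ℝ, t ∈ Set.Ico 0 T → 0 < X t * Real.tan α + Y t) :
    R₀ ^ 2 - 2 * v * ∫ s in (0:ℝ)..T, Y s ≤ c₂sq * R₀ ^ 2 := by
  obtain ⟨hα0, hα8⟩ := hα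
  have hπ : π < 3.15 := Real.pi_lt_d2
  have hπ0 : 0 < π := Real.pi_pos
  set s := Real.sin (α/2) with hsdef
  set c := Real.cos (α/2) with hcdef
  -- numeric facts about α
  have hα04 : α < 0.4 := by nlinarith
  have hspos : 0 < s := Real.sin_pos_of_pos_of_lt_pi (by linarith) (by linarith)
  have hcpos : 0 < c := Real.cos_pos_of_mem_Ioo (Set.mem_Ioo.mpr ⟨by linarith, by linarith⟩)
  have hc1 : c ≤ 1 := Real.cos_le_one _
  have hpyth : s^2 + c^2 = 1 := Real.sin_sq_add_cos_sq (α/2)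
  have hslt : s < 0.2 := lt_of_lt_of_le (Real.sin_lt (by linarith)) (by linarith)
  have hs2 : s^2 ≤ 1/25 := by nlinarith
  have hcαpos : 0 < Real.cos α := Real.cos_pos_of_mem_Ioo (Set.mem_Ioo.mpr ⟨by linarith, by linarith⟩)
  clear_value s c
  -- continuity
  have hcosβ : Continuous fun u => Real.cos (β u) := Real.continuous_cos.comp hβcont
  have hsinβ : Continuous fun u => Real.sin (β u) := Real.continuous_sin.comp hβcont
  set A : ℝ → ℝ := (fun t => ∫ u in (0:ℝ)..t, Real.cos (β u)) with hAdef
  set B : ℝ → ℝ := (fun t => ∫ u in (0:ℝ)..t, Real.sin (β u)) with hBdef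
  have hAderiv : ∀ t : ℝ, HasDerivAt A (Real.cos (β t)) t := fun t =>
    (hcosβ.integral_hasStrictDerivAt 0 t).hasDerivAt
  have hBderiv : ∀ t : ℝ, HasDerivAt B (Real.sin (β t)) t := fun t =>
    (hsinβ.integral_hasStrictDerivAt 0 t).hasDerivAt
  have hAcont : Continuous A := by
    rw [continuous_iff_continuousAt]; exact fun t => (hAderiv t).continuousAt
  -- rewriting Y and X
  have hYeq : ∀ t : ℝ, Y t = Real.sin (β t) * (R₀ - v * B t) - Real.cos (β t) * (v * A t) := by
    intro t
    have hint : ∫ u in (0:ℝ)..t, Real.cos (β t - β u)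
        = Real.cos (β t) * A t + Real.sin (β t) * B t := by
      rw [hAdef, hBdef, ← intervalIntegral.integral_const_mul,
        ← intervalIntegral.integral_const_mul,
        ← intervalIntegral.integral_add (f := fun u => Real.cos (β t) * Real.cos (β u))
          (g := fun u => Real.sin (β t) * Real.sin (β u))
          ((continuous_const.mul hcosβ).intervalIntegrable 0 t)
          ((continuous_const.mul hsinβ).intervalIntegrable 0 t)]
      apply intervalIntegral.integral_congr
      intro u _
      exact Real.cos_sub (β t) (β u)
    rw [hY t, hint]; ring
  have hXeq : ∀ t : ℝ, X t = Real.cos (β t) * (R₀ - v * B t) + Real.sin (β t) * (v * A t) := by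
    intro t
    have hint : ∫ u in (0:ℝ)..t, Real.sin (β t - β u)
        = Real.sin (β t) * A t - Real.cos (β t) * B t := by
      rw [hAdef, hBdef, ← intervalIntegral.integral_const_mul,
        ← intervalIntegral.integral_const_mul,
        ← intervalIntegral.integral_sub (f := fun u => Real.sin (β t) * Real.cos (β u))
          (g := fun u => Real.cos (β t) * Real.sin (β u))
          ((continuous_const.mul hcosβ).intervalIntegrable 0 t)
          ((continuous_const.mul hsinβ).intervalIntegrable 0 t)]
      apply intervalIntegral.integral_congr
      intro u _
      exact Real.sin_sub (β t) (β u)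
    rw [hX t, hint]; ring
  -- FTC: R₀² - 2v∫Y = P T ^2 + Q T ^2
  have hFderiv : ∀ t : ℝ, HasDerivAt (fun t => (R₀ - v * B t)^2 + (v * A t)^2)
      (-2*v*(Real.sin (β t) * (R₀ - v * B t) - Real.cos (β t) * (v * A t))) t := by
    intro t
    have h1 : HasDerivAt (fun t => R₀ - v * B t) (-(v * Real.sin (β t))) t :=
      ((hBderiv t).const_mul v).const_sub R₀
    have h2 : HasDerivAt (fun t => v * A t) (v * Real.cos (β t)) t :=
      (hAderiv t).const_mul v
    have := (h1.pow 2).add (h2.pow 2)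
    refine this.congr_deriv ?_
    push_cast
    ring
  have hFTC : R₀ ^ 2 - 2 * v * ∫ u in (0:ℝ)..T, Y u
      = (R₀ - v * B T)^2 + (v * A T)^2 := by
    have hYc : Continuous fun t => Real.sin (β t) * (R₀ - v * B t) - Real.cos (β t) * (v * A t) := by
      have hBcont : Continuous B := by
        rw [continuous_iff_continuousAt]; exact fun t => (hBderiv t).continuousAt
      fun_prop
    have heq : ∫ u in (0:ℝ)..T, (-2*v*(Real.sin (β u) * (R₀ - v * B u) - Real.cos (β u) * (v * A u)))
        = ((R₀ - v * B T)^2 + (v * A T)^2) - ((R₀ - v * B 0)^2 + (v * A 0)^2) :=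
      intervalIntegral.integral_eq_sub_of_hasDerivAt (fun t _ => hFderiv t)
        ((continuous_const.mul hYc).intervalIntegrable 0 T)
    have hA0 : A 0 = 0 := intervalIntegral.integral_same
    have hB0 : B 0 = 0 := intervalIntegral.integral_same
    have hYint : ∫ u in (0:ℝ)..T, Y u
        = ∫ u in (0:ℝ)..T, (Real.sin (β u) * (R₀ - v * B u) - Real.cos (β u) * (v * A u)) :=
      intervalIntegral.integral_congr (fun u _ => hYeq u)
    rw [hYint]
    rw [intervalIntegral.integral_const_mul] at heq
    rw [hA0, hB0] at heq
    linear_combination heq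
  rw [hFTC]
  -- lower bound A, upper bound |B|
  have hAlow : ∀ t : ℝ, 0 ≤ t → t * c ≤ A t := by
    intro t ht
    simp only [hAdef]
    have h1 : ∫ u in (0:ℝ)..t, c ≤ ∫ u in (0:ℝ)..t, Real.cos (β u) := by
      apply intervalIntegral.integral_mono_on ht intervalIntegrable_const
        (hcosβ.intervalIntegrable 0 t)
      intro u hu
      have hbu := hβ u hu.1
      rw [hcdef, ← Real.cos_abs (β u)]
      exact Real.cos_le_cos_of_nonneg_of_le_pi (abs_nonneg _) (by nlinarith) (le_of_lt hbu)
    simpa using h1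
  have hBabs : ∀ t : ℝ, 0 ≤ t → |B t| ≤ t * s := by
    intro t ht
    simp only [hBdef]
    have h1 : ‖∫ u in (0:ℝ)..t, Real.sin (β u)‖ ≤ s * |t - 0| := by
      apply intervalIntegral.norm_integral_le_of_norm_le_const
      intro x hx
      rw [Set.uIoc_of_le ht] at hx
      have hbx := hβ x (le_of_lt hx.1)
      have habx := abs_lt.mp hbx
      have hmem1 : β x ∈ Set.Icc (-(π/2)) (π/2) :=
        Set.mem_Icc.mpr ⟨by linarith [habx.1], by linarith [habx.2]⟩
      have hmem2 : α/2 ∈ Set.Icc (-(π/2)) (π/2) := Set.mem_Icc.mpr ⟨by linarith, by linarith⟩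
      have hmem3 : -(α/2) ∈ Set.Icc (-(π/2)) (π/2) := Set.mem_Icc.mpr ⟨by linarith, by linarith⟩
      rw [Real.norm_eq_abs, abs_le, hsdef]
      constructor
      · have := Real.strictMonoOn_sin.monotoneOn hmem3 hmem1 (le_of_lt habx.1)
        rw [Real.sin_neg] at this
        linarith [this]
      · exact Real.strictMonoOn_sin.monotoneOn hmem1 hmem2 (le_of_lt habx.2)
    rw [Real.norm_eq_abs, sub_zero, abs_of_nonneg ht] at h1
    linarith [h1]
  have hA00 : A 0 = 0 := intervalIntegral.integral_same
  clear hAdef hBdef hAderiv hBderiv hFderiv hX hY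
  clear_value A B
  have htanα : Real.tan α * Real.cos α = Real.sin α := by
    rw [Real.tan_eq_sin_div_cos]
    field_simp
  -- the stay condition gives a strict bound for t < T
  have hkey : ∀ t : ℝ, t ∈ Set.Ico 0 T →
      (v * A t) * Real.cos (2*α) < c * (3*s - 4*s^3) * R₀ := by
    rintro t ⟨ht0, htT⟩
    have hbt := hβ t ht0
    have habs := abs_lt.mp hbt
    have hstayt := hstay t ⟨ht0, htT⟩
    rw [hXeq t, hYeq t] at hstayt
    have h2 : 0 < (R₀ - v * B t) * Real.sin (α + β t) - (v * A t) * Real.cos (α + β t) := by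
      have h3 : 0 < ((Real.cos (β t) * (R₀ - v * B t) + Real.sin (β t) * (v * A t)) * Real.tan α
          + (Real.sin (β t) * (R₀ - v * B t) - Real.cos (β t) * (v * A t))) * Real.cos α :=
        mul_pos hstayt hcαpos
      have heqx : ((Real.cos (β t) * (R₀ - v * B t) + Real.sin (β t) * (v * A t)) * Real.tan α
          + (Real.sin (β t) * (R₀ - v * B t) - Real.cos (β t) * (v * A t))) * Real.cos α
          = (R₀ - v * B t) * (Real.sin α * Real.cos (β t) + Real.cos α * Real.sin (β t))
            - (v * A t) * (Real.cos α * Real.cos (β t) - Real.sin α * Real.sin (β t)) := by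
        linear_combination (Real.cos (β t) * (R₀ - v * B t) + Real.sin (β t) * (v * A t)) * htanα
      rw [heqx] at h3
      rw [Real.sin_add, Real.cos_add]
      linarith
    have hsinpos : 0 < Real.sin (α + β t) :=
      Real.sin_pos_of_pos_of_lt_pi (by linarith [habs.1]) (by linarith [habs.2])
    have hsin3pos : 0 < Real.sin (α + α/2) :=
      Real.sin_pos_of_pos_of_lt_pi (by linarith) (by linarith)
    have hcos3pos : 0 < Real.cos (α + α/2) :=
      Real.cos_pos_of_mem_Ioo (Set.mem_Ioo.mpr ⟨by linarith, by linarith⟩)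
    have hmm1 : α + β t ∈ Set.Icc (-(π/2)) (π/2) :=
      Set.mem_Icc.mpr ⟨by linarith [habs.1], by linarith [habs.2]⟩
    have hmm2 : α + α/2 ∈ Set.Icc (-(π/2)) (π/2) := Set.mem_Icc.mpr ⟨by linarith, by linarith⟩
    have hsinle : Real.sin (α + β t) ≤ Real.sin (α + α/2) :=
      Real.strictMonoOn_sin.monotoneOn hmm1 hmm2 (by linarith [habs.2])
    have hcosge : Real.cos (α + α/2) ≤ Real.cos (α + β t) :=
      Real.cos_le_cos_of_nonneg_of_le_pi (by linarith [habs.1]) (by linarith)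
        (by linarith [habs.2])
    have hcosbpos : 0 < Real.cos (α + β t) := lt_of_lt_of_le hcos3pos hcosge
    have hQ0 : 0 ≤ v * A t := by
      have h6 := mul_le_mul_of_nonneg_left (hAlow t ht0) (le_of_lt hv)
      have h7 : 0 ≤ v * (t * c) := mul_nonneg (le_of_lt hv) (mul_nonneg ht0 (le_of_lt hcpos))
      linarith
    have hPpos : 0 < R₀ - v * B t := by
      by_contra hP
      push_neg at hP
      have h4 : (R₀ - v * B t) * Real.sin (α + β t) ≤ 0 :=
        mul_nonpos_of_nonpos_of_nonneg hP (le_of_lt hsinpos)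
      have h5 : 0 ≤ (v * A t) * Real.cos (α + β t) :=
        mul_nonneg hQ0 (le_of_lt hcosbpos)
      linarith
    have hPle : R₀ - v * B t ≤ R₀ + v * (t * s) := by
      have h6 := (abs_le.mp (hBabs t ht0)).1
      have h7 := mul_le_mul_of_nonneg_left h6 (le_of_lt hv)
      linarith
    have hch : (v * A t) * Real.cos (α + α/2) < (R₀ + v * (t * s)) * Real.sin (α + α/2) := by
      calc (v * A t) * Real.cos (α + α/2)
          ≤ (v * A t) * Real.cos (α + β t) := mul_le_mul_of_nonneg_left hcosge hQ0
        _ < (R₀ - v * B t) * Real.sin (α + β t) := by linarith [h2]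
        _ ≤ (R₀ - v * B t) * Real.sin (α + α/2) :=
            mul_le_mul_of_nonneg_left hsinle (le_of_lt hPpos)
        _ ≤ (R₀ + v * (t * s)) * Real.sin (α + α/2) :=
            mul_le_mul_of_nonneg_right hPle (le_of_lt hsin3pos)
    have hvts : c * (v * (t * s)) ≤ s * (v * A t) := by
      have h6 := mul_le_mul_of_nonneg_left (hAlow t ht0)
        (mul_nonneg (le_of_lt hv) (le_of_lt hspos))
      have h7 : c * (v * (t * s)) = v * s * (t * c) := by ring
      have h8 : s * (v * A t) = v * s * A t := by ring
      rw [h7, h8]; exact h6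
    have hid : Real.cos (2*α) = Real.cos (α + α/2) * c - Real.sin (α + α/2) * s := by
      rw [hcdef, hsdef, ← Real.cos_add]
      congr 1
      ring
    have hsin3 : Real.sin (α + α/2) = 3*s - 4*s^3 := by
      rw [hsdef, show α + α/2 = 3*(α/2) from by ring, Real.sin_three_mul]
    rw [hid, ← hsin3]
    linarith only [mul_lt_mul_of_pos_left hch hcpos,
      mul_le_mul_of_nonneg_right hvts (le_of_lt hsin3pos)]
  -- pass to the limit t → T
  have hQT : (v * A T) * Real.cos (2*α) ≤ c * (3*s - 4*s^3) * R₀ := by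
    rcases eq_or_lt_of_le hT with h0 | hTpos
    · have hA0 : A T = 0 := by rw [← h0]; exact hA00
      rw [hA0]
      have h9 : s * s^2 ≤ s * (1/25) := mul_le_mul_of_nonneg_left hs2 (le_of_lt hspos)
      have h10 : 0 < 3*s - 4*s^3 := by nlinarith only [h9, hspos]
      have h8 : 0 < c * (3*s - 4*s^3) * R₀ := mul_pos (mul_pos hcpos h10) hR₀
      linarith only [h8]
    · have hcont : ContinuousAt (fun t => (v * A t) * Real.cos (2*α)) T :=
        ((continuous_const.mul hAcont).mul continuous_const).continuousAt
      apply le_of_tendsto (hcont.tendsto.mono_left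
        (nhdsWithin_le_nhds : nhdsWithin T (Set.Iio T) ≤ nhds T))
      filter_upwards [Ioo_mem_nhdsLT_of_mem ⟨hTpos, le_refl T⟩] with t ht
      exact le_of_lt (hkey t ⟨le_of_lt ht.1, ht.2⟩)
  -- identities to convert cos 2α and c₂sq
  have hcos2α : Real.cos (2*α) = 1 - 8*s^2*c^2 := by
    rw [show 2*α = 2*(2*(α/2)) from by ring, Real.cos_two_mul, Real.cos_two_mul, ← hcdef]
    linear_combination (8*c^2) * hpyth
  have hcosα : Real.cos α = 1 - 2*s^2 := by
    rw [show α = 2*(α/2) from by ring, Real.cos_two_mul', ← hcdef, ← hsdef]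
    linear_combination hpyth
  have hsinα : Real.sin α = 2*s*c := by
    rw [show α = 2*(α/2) from by ring, Real.sin_two_mul, ← hcdef, ← hsdef]
  have hd₂' : d₂ = (s*(1-2*s^2)+2*s*c)/(1-8*s^2*c^2) := by
    rw [hd₂, hcos2α, add_mul, htanα, hcosα, hsinα]
  have hc₂eq : c₂sq = c^2 + ((s*(1-2*s^2)+2*s*c)/(1-8*s^2*c^2) + s)^2 := by
    rw [hc₂, hd₂']
    linear_combination -hpyth
  rw [hc₂eq]
  -- final application of dist_bound
  have hQ0T : 0 ≤ v * A T := by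
    have h6 := mul_le_mul_of_nonneg_left (hAlow T hT) (le_of_lt hv)
    have h7 : 0 ≤ v * (T * c) := mul_nonneg (le_of_lt hv) (mul_nonneg hT (le_of_lt hcpos))
    linarith
  have hPbT : |R₀ - v * B T| ≤ R₀ + v * (T * s) := by
    have h6 := abs_le.mp (hBabs T hT)
    have h7 := mul_le_mul_of_nonneg_left h6.1 (le_of_lt hv)
    have h8 := mul_le_mul_of_nonneg_left h6.2 (le_of_lt hv)
    rw [abs_le]
    constructor <;> [linarith; linarith]
  have hvtsT : c * (v * (T * s)) ≤ s * (v * A T) := by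
    have h6 := mul_le_mul_of_nonneg_left (hAlow T hT)
      (mul_nonneg (le_of_lt hv) (le_of_lt hspos))
    have h7 : c * (v * (T * s)) = v * s * (T * c) := by ring
    have h8 : s * (v * A T) = v * s * A T := by ring
    rw [h7, h8]; exact h6
  have hmT : 0 ≤ v * (T * s) := by positivity
  have hQbT : (v * A T) * (1 - 8*s^2*c^2) ≤ c*(3*s - 4*s^3)*R₀ := by
    rw [← hcos2α]; exact hQT
  exact dist_bound s c R₀ (R₀ - v * B T) (v * A T) (v * (T * s)) hR₀ hspos hcpos hc1
    hpyth hs2 hmT hPbT hvtsT hQ0T hQbT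
end
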